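/- arXiv:0807.3578 — 6 statements merged into one kernel-verified Lean document; each statement's English description precedes it below -/
import Mathlib

section
/- Suppose a, b, c, d ∈ ℂ[X] are nonconstant and satisfy a ∘ b = c ∘ d. Then: (1) if deg c divides deg a, then a = c ∘ â for some â ∈ ℂ[X]; (2) if deg d divides deg b, then b = b̂ ∘ d for some b̂ ∈ ℂ[X]; (3) if deg a = deg c, then there is a linear ℓ ∈ ℂ[X] such that a = c ∘ ℓ and b = ℓ^{-1} ∘ d. -/
open Polynomial Finset

private lemma comp_sub_comp (a u v : ℂ[X]) :
    a.comp u - a.comp v =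
      (u - v) * ∑ i ∈ range (a.natDegree + 1),
        C (a.coeff i) * ∑ j ∈ range i, u ^ j * v ^ (i - 1 - j) := by
  rw [Polynomial.comp, Polynomial.comp, Polynomial.eval₂_eq_sum_range,
    Polynomial.eval₂_eq_sum_range, ← Finset.sum_sub_distrib, Finset.mul_sum]
  refine Finset.sum_congr rfl fun i _ => ?_
  rw [← mul_sub, ← geom_sum₂_mul]
  ring

private lemma W_coeff (a u v : ℂ[X]) (n D : ℕ) (hn : a.natDegree = n) (hn0 : 0 < n)
    (hu : u.natDegree = D) (hv : v.natDegree = D) (hD : 0 < D)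
    (hl : u.leadingCoeff = v.leadingCoeff) :
    ((∑ i ∈ range (n + 1),
        C (a.coeff i) * ∑ j ∈ range i, u ^ j * v ^ (i - 1 - j)).coeff ((n - 1) * D)
      = (n : ℂ) * a.leadingCoeff * v.leadingCoeff ^ (n - 1)) ∧
    (∑ i ∈ range (n + 1),
        C (a.coeff i) * ∑ j ∈ range i, u ^ j * v ^ (i - 1 - j)).natDegree ≤ (n - 1) * D := by
  have hu0 : u ≠ 0 := fun h => by simp [h] at hu; omega
  have hv0 : v ≠ 0 := fun h => by simp [h] at hv; omega
  have hterm : ∀ i, ∀ j ∈ range i, (u ^ j * v ^ (i - 1 - j)).natDegree = (j + (i - 1 - j)) * D := by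
    intro i j hj
    rw [natDegree_mul (pow_ne_zero _ hu0) (pow_ne_zero _ hv0), natDegree_pow, natDegree_pow,
      hu, hv, add_mul]
  have hdegbound : ∀ i ∈ range (n + 1),
      (C (a.coeff i) * ∑ j ∈ range i, u ^ j * v ^ (i - 1 - j)).natDegree ≤ (i - 1) * D := by
    intro i _
    refine natDegree_mul_le.trans ?_
    rw [natDegree_C, zero_add]
    refine natDegree_sum_le_of_forall_le _ _ fun j hj => ?_
    rw [hterm i j hj]
    have := mem_range.mp hj
    exact Nat.mul_le_mul_right _ (by omega)
  constructor
  · rw [finset_sum_coeff, Finset.sum_range_succ]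
    have hz : ∀ i ∈ range n,
        (C (a.coeff i) * ∑ j ∈ range i, u ^ j * v ^ (i - 1 - j)).coeff ((n - 1) * D) = 0 := by
      intro i hi
      rcases Nat.eq_zero_or_pos i with h0 | h1
      · simp [h0]
      · refine coeff_eq_zero_of_natDegree_lt (lt_of_le_of_lt (hdegbound i ?_) ?_)
        · have := mem_range.mp hi; exact mem_range.mpr (by omega)
        · have := mem_range.mp hi
          exact (Nat.mul_lt_mul_right hD).mpr (by omega)
    rw [Finset.sum_eq_zero hz, zero_add, coeff_C_mul, finset_sum_coeff]
    have : ∀ j ∈ range n, (u ^ j * v ^ (n - 1 - j)).coeff ((n - 1) * D)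
        = v.leadingCoeff ^ (n - 1) := by
      intro j hj
      have hjn := mem_range.mp hj
      have hdeg : (u ^ j * v ^ (n - 1 - j)).natDegree = (n - 1) * D := by
        rw [hterm n j hj]; congr 1; omega
      rw [← hdeg, coeff_natDegree, leadingCoeff_mul, leadingCoeff_pow, leadingCoeff_pow,
        hl, ← pow_add]
      congr 1; omega
    rw [Finset.sum_congr rfl this, Finset.sum_const, card_range, nsmul_eq_mul]
    rw [← hn, coeff_natDegree]
    ring
  · exact natDegree_sum_le_of_forall_le _ _ fun i hi =>
      (hdegbound i hi).trans (Nat.mul_le_mul_right _ (by have := mem_range.mp hi; omega))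

private lemma comp_sub_comp_natDegree (a u v : ℂ[X]) (hn0 : 0 < a.natDegree)
    (hu : u.natDegree = v.natDegree) (hD : 0 < v.natDegree)
    (hl : u.leadingCoeff = v.leadingCoeff) (hne : u ≠ v) :
    a.comp u - a.comp v ≠ 0 ∧
    (a.comp u - a.comp v).natDegree
      = (a.natDegree - 1) * v.natDegree + (u - v).natDegree := by
  set n := a.natDegree with hn
  set D := v.natDegree with hDdef
  obtain ⟨hco, hle⟩ := W_coeff a u v n D rfl hn0 hu rfl hD hl
  set W := ∑ i ∈ range (n + 1), C (a.coeff i) * ∑ j ∈ range i, u ^ j * v ^ (i - 1 - j) with hW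
  have ha0 : a ≠ 0 := fun h => by simp [h] at hn; omega
  have hv0 : v ≠ 0 := fun h => by simp [h] at hDdef; omega
  have hcne : W.coeff ((n - 1) * D) ≠ 0 := by
    rw [hco]
    exact mul_ne_zero (mul_ne_zero (Nat.cast_ne_zero.mpr (by omega))
      (leadingCoeff_ne_zero.mpr ha0)) (pow_ne_zero _ (leadingCoeff_ne_zero.mpr hv0))
  have hW0 : W ≠ 0 := fun h => hcne (by simp [h])
  have hWdeg : W.natDegree = (n - 1) * D := le_antisymm hle (le_natDegree_of_ne_zero hcne)
  have huv : u - v ≠ 0 := sub_ne_zero.mpr hne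
  rw [comp_sub_comp]
  exact ⟨mul_ne_zero huv hW0, by rw [natDegree_mul huv hW0, hWdeg]; ring⟩

private lemma comp_division (d : ℂ[X]) (hd : 0 < d.natDegree) (N : ℕ) :
    ∀ b : ℂ[X], b.natDegree ≤ N → ∃ p r : ℂ[X],
      b = p.comp d + r ∧ r.natDegree ≤ b.natDegree ∧
      (r = 0 ∨ ¬ d.natDegree ∣ r.natDegree) := by
  induction N using Nat.strong_induction_on with
  | _ N IH =>
    intro b hbN
    by_cases hb0 : b = 0
    · exact ⟨0, 0, by simp [hb0], by simp, Or.inl rfl⟩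
    have hdne : d ≠ 0 := fun h => by simp [h] at hd
    by_cases hdvd : d.natDegree ∣ b.natDegree
    · obtain ⟨k, hk⟩ := hdvd
      set L' : ℂ := b.leadingCoeff / d.leadingCoeff ^ k with hL'def
      have hL' : L' ≠ 0 := div_ne_zero (leadingCoeff_ne_zero.mpr hb0)
        (pow_ne_zero _ (leadingCoeff_ne_zero.mpr hdne))
      set t : ℂ[X] := C L' * d ^ k with ht
      have ht0 : t ≠ 0 := mul_ne_zero (by simpa using hL') (pow_ne_zero _ hdne)
      have htD : t.natDegree = b.natDegree := by
        rw [ht, natDegree_mul (by simpa using hL') (pow_ne_zero _ hdne), natDegree_C,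
          natDegree_pow, zero_add, hk, mul_comm]
      have htL : t.leadingCoeff = b.leadingCoeff := by
        rw [ht, leadingCoeff_mul, leadingCoeff_pow, leadingCoeff_C, hL'def,
          div_mul_cancel₀ _ (pow_ne_zero _ (leadingCoeff_ne_zero.mpr hdne))]
      have htc : t = (C L' * X ^ k).comp d := by
        rw [mul_comp, C_comp, X_pow_comp]
      by_cases hb' : b - t = 0
      · exact ⟨C L' * X ^ k, 0, by rw [← htc, add_zero]; exact sub_eq_zero.mp hb',
          by simp, Or.inl rfl⟩
      · have hlt : (b - t).natDegree < b.natDegree := by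
          refine natDegree_lt_natDegree hb' (degree_sub_lt ?_ hb0 htL.symm)
          rw [degree_eq_natDegree hb0, degree_eq_natDegree ht0, htD]
        obtain ⟨p', r', h1, h2, h3⟩ := IH (b - t).natDegree (by omega) (b - t) le_rfl
        refine ⟨p' + C L' * X ^ k, r', ?_, by omega, h3⟩
        rw [add_comp, ← htc]
        have : b = (b - t) + t := by ring
        rw [this, h1]; ring
    · set t : ℂ[X] := C b.leadingCoeff * X ^ b.natDegree with ht
      have hL : b.leadingCoeff ≠ 0 := leadingCoeff_ne_zero.mpr hb0
      have ht0 : t ≠ 0 := by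
        rw [ht]; exact mul_ne_zero (by simpa using hL) (pow_ne_zero _ X_ne_zero)
      have htD : t.natDegree = b.natDegree := natDegree_C_mul_X_pow _ _ hL
      have htL : t.leadingCoeff = b.leadingCoeff := by
        rw [ht, leadingCoeff_C_mul_X_pow]
      by_cases hb' : b - t = 0
      · exact ⟨0, b, by simp, le_rfl, Or.inr hdvd⟩
      · have hlt : (b - t).natDegree < b.natDegree := by
          refine natDegree_lt_natDegree hb' (degree_sub_lt ?_ hb0 htL.symm)
          rw [degree_eq_natDegree hb0, degree_eq_natDegree ht0, htD]
        obtain ⟨p', r', h1, h2, h3⟩ := IH (b - t).natDegree (by omega) (b - t) le_rfl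
        have hrt : (r' + t).natDegree = b.natDegree := by
          rw [← htD]; exact natDegree_add_eq_right_of_natDegree_lt (by omega)
        refine ⟨p', r' + t, ?_, by omega, Or.inr (by rw [hrt]; exact hdvd)⟩
        have : b = (b - t) + t := by ring
        rw [this, h1]; ring

private lemma rcomp_inj {d p q : ℂ[X]} (hd : 0 < d.natDegree) (h : p.comp d = q.comp d) :
    p = q := by
  have h0 : (p - q).comp d = 0 := by rw [sub_comp, h, sub_self]
  rcases (comp_eq_zero_iff).mp h0 with h1 | ⟨_, h2⟩
  · exact sub_eq_zero.mp h1
  · exfalso; rw [h2] at hd; simp at hd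

private lemma inner_factor (a b c d : ℂ[X])
    (ha : 0 < a.natDegree) (hb : 0 < b.natDegree) (hd : 0 < d.natDegree)
    (heq : a.comp b = c.comp d) (hdvd : d.natDegree ∣ b.natDegree) :
    ∃ bhat : ℂ[X], b = bhat.comp d := by
  obtain ⟨p, r, hbr, hrle, hr0⟩ := comp_division d hd b.natDegree b le_rfl
  rcases hr0 with rfl | hrnd
  · exact ⟨p, by simpa using hbr⟩
  exfalso
  set m := d.natDegree with hm
  set D := b.natDegree with hDdef
  have hr0' : r ≠ 0 := fun h => hrnd (by simp [h])
  have hrD : r.natDegree < D := lt_of_le_of_ne hrle fun h => hrnd (h ▸ hdvd)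
  set v : ℂ[X] := p.comp d with hv
  have hvb : v = b - r := by rw [hbr]; ring
  have hvD : v.natDegree = D := by rw [hvb, natDegree_sub_eq_left_of_natDegree_lt hrD]
  have hvL : b.leadingCoeff = v.leadingCoeff := by
    rw [← coeff_natDegree (p := v), hvD, hvb, coeff_sub,
      coeff_eq_zero_of_natDegree_lt hrD, sub_zero]
    exact coeff_natDegree.symm
  have hbv : b ≠ v := fun h => hr0' (by rw [hvb] at h; linear_combination h)
  obtain ⟨hne0, hndeg⟩ := comp_sub_comp_natDegree a b v ha (by rw [hvD])
    (by rw [hvD]; exact hb) hvL hbv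
  have hsub : a.comp b - a.comp v = (c - a.comp p).comp d := by
    rw [sub_comp, comp_assoc, ← hv, heq]
  have hq0 : c - a.comp p ≠ 0 := by
    intro h
    rw [h, zero_comp] at hsub
    exact hne0 hsub
  have hbvr : b - v = r := by rw [hvb]; ring
  rw [hsub, natDegree_comp, hbvr, hvD] at hndeg
  apply hrnd
  have h1 : m ∣ (a.natDegree - 1) * D := Dvd.dvd.mul_left hdvd _
  have h2 : m ∣ (a.natDegree - 1) * D + r.natDegree := by
    rw [← hndeg]; exact dvd_mul_left _ _
  exact (Nat.dvd_add_right h1).mp h2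

private lemma lin_comp (e f : ℂ) (he : e ≠ 0) :
    (C e⁻¹ * X + C (-(e⁻¹ * f))).comp (C e * X + C f) = X ∧
    (C e * X + C f).comp (C e⁻¹ * X + C (-(e⁻¹ * f))) = X := by
  have h1 : C e⁻¹ * C e = (1 : ℂ[X]) := by
    rw [← C_mul, inv_mul_cancel₀ he, C_1]
  have h2 : C (-(e⁻¹ * f)) = -(C e⁻¹ * C f) := by rw [← C_mul, map_neg]
  have h3 : C e * C (-(e⁻¹ * f)) = -C f := by
    rw [← C_mul, mul_neg, ← mul_assoc, mul_inv_cancel₀ he, one_mul, map_neg]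
  constructor
  · simp only [add_comp, mul_comp, C_comp, X_comp]
    linear_combination X * h1 + h2
  · simp only [add_comp, mul_comp, C_comp, X_comp]
    linear_combination X * h1 + h3

theorem multiple_degree_divisibility
    (a b c d : ℂ[X])
    (ha : 0 < a.natDegree) (hb : 0 < b.natDegree)
    (hc : 0 < c.natDegree) (hd : 0 < d.natDegree)
    (heq : a.comp b = c.comp d) :
    (c.natDegree ∣ a.natDegree → ∃ ahat : ℂ[X], a = c.comp ahat) ∧
    (d.natDegree ∣ b.natDegree → ∃ bhat : ℂ[X], b = bhat.comp d) ∧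
    (a.natDegree = c.natDegree →
      ∃ ℓ ℓinv : ℂ[X], ℓ.natDegree = 1 ∧
        ℓ.comp ℓinv = Polynomial.X ∧ ℓinv.comp ℓ = Polynomial.X ∧
        a = c.comp ℓ ∧ b = ℓinv.comp d) := by
  have hN : a.natDegree * b.natDegree = c.natDegree * d.natDegree := by
    have := congrArg natDegree heq
    rwa [natDegree_comp, natDegree_comp] at this
  have part2 : d.natDegree ∣ b.natDegree → ∃ bhat : ℂ[X], b = bhat.comp d :=
    fun h => inner_factor a b c d ha hb hd heq h
  refine ⟨?_, part2, ?_⟩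
  · intro h1
    obtain ⟨t, ht⟩ := h1
    have hbd : b.natDegree ∣ d.natDegree := by
      refine ⟨t, Nat.eq_of_mul_eq_mul_left hc ?_⟩
      rw [← hN, ht]; ring
    obtain ⟨dhat, hdhat⟩ := inner_factor c d a b hc hd hb heq.symm hbd
    refine ⟨dhat, rcomp_inj hb ?_⟩
    rw [comp_assoc, ← hdhat]
    exact heq
  · intro h3
    have hbd : b.natDegree = d.natDegree := by
      refine Nat.eq_of_mul_eq_mul_left ha ?_
      rw [hN, h3]
    obtain ⟨bhat, hbhat⟩ := part2 (by rw [hbd])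
    have hbhat1 : bhat.natDegree = 1 := by
      have h := congrArg natDegree hbhat
      rw [natDegree_comp, ← hbd] at h
      have : bhat.natDegree * b.natDegree = 1 * b.natDegree := by
        rw [one_mul, ← h]
      exact Nat.eq_of_mul_eq_mul_right hb this
    set e := bhat.coeff 1 with hedef
    set f := bhat.coeff 0 with hfdef
    have he : e ≠ 0 := by
      have : bhat ≠ 0 := fun h => by simp [h] at hbhat1
      rw [hedef, ← hbhat1, coeff_natDegree]
      exact leadingCoeff_ne_zero.mpr this
    have hbe : bhat = C e * X + C f := eq_X_add_C_of_natDegree_le_one (by rw [hbhat1])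
    obtain ⟨hcomp1, hcomp2⟩ := lin_comp e f he
    refine ⟨C e⁻¹ * X + C (-(e⁻¹ * f)), bhat, ?_, by rw [hbe]; exact hcomp1,
      by rw [hbe]; exact hcomp2, ?_, hbhat⟩
    · exact natDegree_linear (inv_ne_zero he)
    · have hab : a.comp bhat = c := by
        refine rcomp_inj hd ?_
        rw [comp_assoc, ← hbhat]
        exact heq
      rw [← hab, comp_assoc, hbe, hcomp2, comp_X]
end

section
/- Let J be a set of subgroups of a finite cyclic group I, containing the trivial subgroup and I itself, and closed under intersections and products (joins). Let 1 = A_0 < A_1 < ⋯ < A_r = I and 1 = B_0 < B_1 < ⋯ < B_s = I be two maximal strictly increasing chains of groups in J (maximal in the sense that no member of J lies strictly between two consecutive entries). Then r = s, and one can pass from the first chain to the second via finitely many steps, each of which replaces a maximal chain 1 = C_0 < C_1 < ⋯ < C_r = I of groups in J by a maximal chain 1 = D_0 < D_1 < ⋯ < D_r = I of groups in J with D_i = C_i for all i except a single index j satisfying 0 < j < r. -/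
/-- `L` is a maximal strictly increasing chain of subgroups from `⊥` to `⊤`, all of
whose members belong to `Jset`, such that no member of `Jset` lies strictly between
two consecutive entries. -/
def IsMaxChainIn {I : Type*} [Group I] (Jset : Set (Subgroup I))
    (L : List (Subgroup I)) : Prop :=
  (∀ K ∈ L, K ∈ Jset) ∧ L.head? = some ⊥ ∧ L.getLast? = some ⊤ ∧
    List.Chain' (· < ·) L ∧
    ∀ (i : ℕ) (C C' : Subgroup I), L[i]? = some C → L[i + 1]? = some C' →
      ¬ ∃ K ∈ Jset, C < K ∧ K < C'

/-- One step: replace a maximal chain by another maximal chain of the same length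
which differs from it in a single interior position. -/
def ChainStep {I : Type*} [Group I] (Jset : Set (Subgroup I))
    (L M : List (Subgroup I)) : Prop :=
  IsMaxChainIn Jset L ∧ IsMaxChainIn Jset M ∧ L.length = M.length ∧
    ∃ j : ℕ, 0 < j ∧ j + 1 < L.length ∧ ∀ i : ℕ, i ≠ j → L[i]? = M[i]?

namespace MCAux

open Pointwise

variable {I : Type*} [Group I]

/-- relative version of `IsMaxChainIn`, starting at `a`. -/
def MCF (Jset : Set (Subgroup I)) (a : Subgroup I) (L : List (Subgroup I)) : Prop :=
  (∀ K ∈ L, K ∈ Jset) ∧ L.head? = some a ∧ L.getLast? = some ⊤ ∧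
    List.Chain' (· < ·) L ∧
    ∀ (i : ℕ) (C C' : Subgroup I), L[i]? = some C → L[i + 1]? = some C' →
      ¬ ∃ K ∈ Jset, C < K ∧ K < C'

/-- relative version of `ChainStep`. -/
def Step (Jset : Set (Subgroup I)) (a : Subgroup I) (L M : List (Subgroup I)) : Prop :=
  MCF Jset a L ∧ MCF Jset a M ∧ L.length = M.length ∧
    ∃ j : ℕ, 0 < j ∧ j + 1 < L.length ∧ ∀ i : ℕ, i ≠ j → L[i]? = M[i]?

theorem MCF.cons {Jset : Set (Subgroup I)} {a b : Subgroup I} {L : List (Subgroup I)}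
    (h : MCF Jset b L) (ha : a ∈ Jset) (hab : a < b)
    (hcov : ¬ ∃ K ∈ Jset, a < K ∧ K < b) : MCF Jset a (a :: L) := by
  obtain ⟨hmem, hhd, hlast, hch, hmax⟩ := h
  cases L with
  | nil => simp at hhd
  | cons b' L' =>
    have hb' : b' = b := by simpa using hhd
    have hab' : a < b' := by rw [hb']; exact hab
    have hcov' : ¬ ∃ K ∈ Jset, a < K ∧ K < b' := by rw [hb']; exact hcov
    refine ⟨?_, rfl, ?_, ?_, ?_⟩
    · intro K hK
      rcases List.mem_cons.1 hK with h | h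
      · exact h ▸ ha
      · exact hmem K h
    · rw [List.getLast?_cons_cons]; exact hlast
    · exact List.isChain_cons_cons.2 ⟨hab', hch⟩
    · intro i C C' h1 h2
      match i with
      | 0 =>
        have hC : C = a := by simpa using h1.symm
        have hC' : C' = b' := by simpa using h2.symm
        subst hC; subst hC'; exact hcov'
      | Nat.succ n =>
        exact hmax n C C' h1 h2

theorem MCF.destruct {Jset : Set (Subgroup I)} {a b : Subgroup I} {L' : List (Subgroup I)}
    (h : MCF Jset a (a :: b :: L')) :
    MCF Jset b (b :: L') ∧ a < b ∧ ¬ ∃ K ∈ Jset, a < K ∧ K < b := by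
  obtain ⟨hmem, hhd, hlast, hch, hmax⟩ := h
  obtain ⟨hab, hch'⟩ := List.isChain_cons_cons.1 hch
  refine ⟨⟨?_, rfl, ?_, hch', ?_⟩, hab, ?_⟩
  · intro K hK; exact hmem K (List.mem_cons_of_mem a hK)
  · rw [List.getLast?_cons_cons] at hlast; exact hlast
  · intro i C C' h1 h2; exact hmax (i+1) C C' h1 h2
  · exact hmax 0 a b rfl rfl

theorem Step.cons {Jset : Set (Subgroup I)} {a b : Subgroup I} {L M : List (Subgroup I)}
    (h : Step Jset b L M) (ha : a ∈ Jset) (hab : a < b)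
    (hcov : ¬ ∃ K ∈ Jset, a < K ∧ K < b) : Step Jset a (a :: L) (a :: M) := by
  obtain ⟨hL, hM, hlen, j, hj0, hj1, hdiff⟩ := h
  refine ⟨hL.cons ha hab hcov, hM.cons ha hab hcov, by simp [hlen], j + 1, Nat.succ_pos j,
    by simpa using Nat.succ_lt_succ hj1, ?_⟩
  intro i hi
  match i with
  | 0 => rfl
  | Nat.succ n => exact hdiff n (fun hn => hi (by rw [hn]))

theorem rtg_cons {Jset : Set (Subgroup I)} {a b : Subgroup I} {L M : List (Subgroup I)}
    (h : Relation.ReflTransGen (Step Jset b) L M) (ha : a ∈ Jset) (hab : a < b)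
    (hcov : ¬ ∃ K ∈ Jset, a < K ∧ K < b) :
    Relation.ReflTransGen (Step Jset a) (a :: L) (a :: M) := by
  induction h with
  | refl => exact Relation.ReflTransGen.refl
  | tail _ hstep ih => exact ih.tail (hstep.cons ha hab hcov)

/-- one-sided modular law, proved by hand from commutativity. -/
theorem mod_le (hc : ∀ x y : I, x * y = y * x) {x y z : Subgroup I} (hxz : x ≤ z) :
    (x ⊔ y) ⊓ z ≤ x ⊔ (y ⊓ z) := by
  haveI : y.Normal := ⟨fun n hn g => by rw [hc g n, mul_inv_cancel_right]; exact hn⟩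
  intro g hg
  obtain ⟨hg1, hg2⟩ := Subgroup.mem_inf.1 hg
  have hg1' : g ∈ ((x : Set I) * (y : Set I)) := by
    rw [← Subgroup.mul_normal]; exact hg1
  obtain ⟨u, hu, v, hv, huv⟩ := hg1'
  have hvz : v ∈ z := by
    have h1 : u⁻¹ * g ∈ z := mul_mem (inv_mem (hxz hu)) hg2
    rwa [← huv, inv_mul_cancel_left] at h1
  exact huv ▸ Subgroup.mul_mem_sup hu (Subgroup.mem_inf.2 ⟨hv, hvz⟩)

/-- In the sublattice `Jset`, if `D` and `E` both cover `a` and are distinct,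
then `D ⊔ E` covers `D`. -/
theorem cov_sup (hc : ∀ x y : I, x * y = y * x) {Jset : Set (Subgroup I)}
    (hinf : ∀ K₁ K₂ : Subgroup I, K₁ ∈ Jset → K₂ ∈ Jset → K₁ ⊓ K₂ ∈ Jset)
    {a D E : Subgroup I} (hEJ : E ∈ Jset) (hDE : D ≠ E)
    (haD : a < D) (hcovD : ¬ ∃ K ∈ Jset, a < K ∧ K < D)
    (haE : a < E) (hcovE : ¬ ∃ K ∈ Jset, a < K ∧ K < E) :
    D < D ⊔ E ∧ ¬ ∃ K ∈ Jset, D < K ∧ K < D ⊔ E := by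
  have hDF : D < D ⊔ E := by
    refine lt_of_le_of_ne le_sup_left (fun h => ?_)
    have hED : E ≤ D := h ▸ le_sup_right
    rcases lt_or_eq_of_le hED with h' | h'
    · exact hcovD ⟨E, hEJ, haE, h'⟩
    · exact hDE h'.symm
  refine ⟨hDF, ?_⟩
  rintro ⟨K, hKJ, hDK, hKF⟩
  by_cases hEK : E ≤ K
  · exact absurd (sup_le hDK.le hEK) (not_le_of_gt hKF)
  have haK : a ≤ E ⊓ K := le_inf haE.le (haD.trans hDK).le
  have hKE' : E ⊓ K < E := lt_of_le_of_ne inf_le_left (fun h => hEK (h ▸ inf_le_right))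
  rcases lt_or_eq_of_le haK with h' | h'
  · exact hcovE ⟨E ⊓ K, hinf E K hEJ hKJ, h', hKE'⟩
  · -- E ⊓ K = a, use modularity to force K ≤ D
    have hKle : K ≤ D := by
      calc K ≤ (D ⊔ E) ⊓ K := le_inf hKF.le le_rfl
        _ ≤ D ⊔ (E ⊓ K) := mod_le hc hDK.le
        _ = D ⊔ a := by rw [← h']
        _ = D := sup_eq_left.2 haD.le
    exact absurd hKle (not_le_of_gt hDK)

/-- existence of a maximal chain in `Jset` from any `c ∈ Jset` up to `⊤`. -/
theorem exists_mcf [Finite I] {Jset : Set (Subgroup I)} (htop : ⊤ ∈ Jset) :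
    ∀ c : Subgroup I, c ∈ Jset → ∃ L, MCF Jset c L := by
  haveI : Finite (Subgroup I) :=
    Finite.of_injective (fun H => (H : Set I)) SetLike.coe_injective
  have hwf : WellFounded ((· > ·) : Subgroup I → Subgroup I → Prop) := wellFounded_gt
  intro c
  induction c using hwf.induction with
  | _ c ih =>
  intro hcJ
  by_cases hc : c = ⊤
  · subst hc
    refine ⟨[⊤], ?_, rfl, rfl, List.isChain_singleton _, ?_⟩
    · intro K hK; rcases List.mem_singleton.1 hK with h; exact h ▸ htop
    · intro i C C' _ h2
      match i with
      | 0 => simp at h2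
      | Nat.succ n => simp at h2
  · have hlt : c < ⊤ := lt_top_iff_ne_top.2 hc
    have hfin : {K : Subgroup I | K ∈ Jset ∧ c < K}.Finite := Set.toFinite _
    obtain ⟨m, hmS, hmin⟩ : ∃ m ∈ {K : Subgroup I | K ∈ Jset ∧ c < K},
        ∀ K ∈ {K : Subgroup I | K ∈ Jset ∧ c < K}, id K ≤ id m → id m = id K := by
      obtain ⟨m, hmS, hmin'⟩ := hfin.exists_minimal ⟨⊤, htop, hlt⟩
      exact ⟨m, hmS, fun K hK h => le_antisymm (hmin' hK h) h⟩
    have hcov : ¬ ∃ K ∈ Jset, c < K ∧ K < m := by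
      rintro ⟨K, hKJ, hcK, hKm⟩
      have h1 : id m = id K := hmin K ⟨hKJ, hcK⟩ hKm.le
      simp only [id] at h1
      exact absurd h1 (ne_of_gt hKm)
    obtain ⟨P, hP⟩ := ih m hmS.2 hmS.1
    exact ⟨c :: P, hP.cons hcJ hmS.2 hcov⟩

theorem main [Finite I] {Jset : Set (Subgroup I)} (htop : ⊤ ∈ Jset)
    (hinf : ∀ K₁ K₂ : Subgroup I, K₁ ∈ Jset → K₂ ∈ Jset → K₁ ⊓ K₂ ∈ Jset)
    (hsup : ∀ K₁ K₂ : Subgroup I, K₁ ∈ Jset → K₂ ∈ Jset → K₁ ⊔ K₂ ∈ Jset)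
    (hc : ∀ x y : I, x * y = y * x) :
    ∀ (n : ℕ) (L M : List (Subgroup I)) (a : Subgroup I), L.length ≤ n → a ∈ Jset →
      MCF Jset a L → MCF Jset a M →
      L.length = M.length ∧ Relation.ReflTransGen (Step Jset a) L M := by
  intro n
  induction n with
  | zero =>
    intro L M a hlen _ hL _
    rcases List.length_eq_zero_iff.1 (Nat.le_zero.1 hlen) with rfl
    simp [MCF] at hL
  | succ n ih =>
    intro L M a hlen haJ hL hM
    -- L starts with a
    obtain ⟨L₁, rfl⟩ : ∃ L₁, L = a :: L₁ := by
      cases L with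
      | nil => simp [MCF] at hL
      | cons x L₁ => exact ⟨L₁, by have := hL.2.1; simp at this; rw [this]⟩
    obtain ⟨M₁, rfl⟩ : ∃ M₁, M = a :: M₁ := by
      cases M with
      | nil => simp [MCF] at hM
      | cons x M₁ => exact ⟨M₁, by have := hM.2.1; simp at this; rw [this]⟩
    cases L₁ with
    | nil =>
      have haT : a = ⊤ := by have := hL.2.2.1; simpa using this
      cases M₁ with
      | nil => exact ⟨rfl, Relation.ReflTransGen.refl⟩
      | cons E M₂ =>
        have haE : a < E := (List.isChain_cons_cons.1 hM.2.2.2.1).1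
        exact absurd (haT ▸ haE) not_top_lt
    | cons D L₂ =>
      have haD : a < D := (List.isChain_cons_cons.1 hL.2.2.2.1).1
      cases M₁ with
      | nil =>
        have haT : a = ⊤ := by have := hM.2.2.1; simpa using this
        exact absurd (haT ▸ haD) not_top_lt
      | cons E M₂ =>
        obtain ⟨hL', haD', hcovD⟩ := hL.destruct
        obtain ⟨hM', haE', hcovE⟩ := hM.destruct
        have hDJ : D ∈ Jset := hL'.1 D List.mem_cons_self
        have hEJ : E ∈ Jset := hM'.1 E List.mem_cons_self
        have hlen' : (D :: L₂).length ≤ n := Nat.succ_le_succ_iff.1 hlen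
        by_cases hDE : D = E
        · subst hDE
          obtain ⟨hlen2, hrtg⟩ := ih (D :: L₂) (D :: M₂) D hlen' hDJ hL' hM'
          exact ⟨by simpa using hlen2, rtg_cons hrtg haJ haD' hcovD⟩
        · set F := D ⊔ E with hF
          have hFJ : F ∈ Jset := hsup D E hDJ hEJ
          have covD := cov_sup hc hinf hEJ hDE haD' hcovD haE' hcovE
          have covE : E < F ∧ ¬ ∃ K ∈ Jset, E < K ∧ K < F := by
            have := cov_sup hc hinf hDJ (Ne.symm hDE) haE' hcovE haD' hcovD
            rwa [sup_comm E D] at this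
          obtain ⟨P, hP⟩ := exists_mcf htop F hFJ
          have hDP : MCF Jset D (D :: P) := hP.cons hDJ covD.1 covD.2
          have hEP : MCF Jset E (E :: P) := hP.cons hEJ covE.1 covE.2
          have hN1 : MCF Jset a (a :: D :: P) := hDP.cons haJ haD' hcovD
          have hN2 : MCF Jset a (a :: E :: P) := hEP.cons haJ haE' hcovE
          obtain ⟨hlenDP, hrtg1⟩ := ih (D :: L₂) (D :: P) D hlen' hDJ hL' hDP
          have hlenEP : (E :: P).length ≤ n := by
            simp only [List.length_cons] at hlenDP hlen' ⊢; omega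
          obtain ⟨hlenEM, hrtg2⟩ := ih (E :: P) (E :: M₂) E hlenEP hEJ hEP hM'
          -- P is nonempty
          obtain ⟨p0, P', rfl⟩ : ∃ p0 P', P = p0 :: P' := by
            cases P with
            | nil => simp [MCF] at hP
            | cons p0 P' => exact ⟨p0, P', rfl⟩
          have hstep : Step Jset a (a :: D :: p0 :: P') (a :: E :: p0 :: P') := by
            refine ⟨hN1, hN2, rfl, 1, Nat.one_pos, ?_, ?_⟩
            · simp
            · intro i hi
              match i with
              | 0 => rfl
              | 1 => exact absurd rfl hi
              | Nat.succ (Nat.succ k) => rfl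
          constructor
          · simp only [List.length_cons] at hlenDP hlenEM ⊢; omega
          · exact (rtg_cons hrtg1 haJ haD' hcovD).trans
              ((Relation.ReflTransGen.single hstep).trans (rtg_cons hrtg2 haJ haE' hcovE))

end MCAux

theorem maximal_chains_connected
    (I : Type*) [Group I] [Finite I] (hcyc : IsCyclic I)
    (Jset : Set (Subgroup I))
    (hbot : ⊥ ∈ Jset) (htop : ⊤ ∈ Jset)
    (hinf : ∀ K₁ K₂ : Subgroup I, K₁ ∈ Jset → K₂ ∈ Jset → K₁ ⊓ K₂ ∈ Jset)
    (hsup : ∀ K₁ K₂ : Subgroup I, K₁ ∈ Jset → K₂ ∈ Jset → K₁ ⊔ K₂ ∈ Jset)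
    (LA LB : List (Subgroup I))
    (hA : IsMaxChainIn Jset LA) (hB : IsMaxChainIn Jset LB) :
    LA.length = LB.length ∧ Relation.ReflTransGen (ChainStep Jset) LA LB := by
  have hc : ∀ x y : I, x * y = y * x := fun x y => (@IsCyclic.commGroup I _ hcyc).mul_comm x y
  have h := MCAux.main htop hinf hsup hc LA.length LA LB ⊥ le_rfl hbot hA hB
  exact h
end

section
/- If a, b ∈ ℂ[X] are nonconstant and satisfy a ∘ b = X^n, then k := deg a divides n and there is a linear ℓ ∈ ℂ[X] such that a = X^k ∘ ℓ and b = ℓ^{-1} ∘ X^{n/k}. If a, b ∈ ℂ[X] are nonconstant and satisfy a ∘ b = T_n, then k := deg a divides n and there is a linear ℓ ∈ ℂ[X] such that a = T_k ∘ ℓ and b = ℓ^{-1} ∘ T_{n/k}. -/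
open Polynomial

/-- The normalized degree-`n` Chebyshev polynomial `T_n`, characterized by
`T_n(Y + 1/Y) = Y^n + 1/Y^n`; it is the Dickson polynomial `D_n(X, 1)`
of the first kind. -/
noncomputable def chebT (n : ℕ) : ℂ[X] :=
  Polynomial.dickson 1 (1 : ℂ) n

private lemma comp_right_cancel {p q r : ℂ[X]} (hr : 0 < r.natDegree)
    (h : p.comp r = q.comp r) : p = q := by
  apply Polynomial.funext
  intro y
  obtain ⟨x, hx⟩ : ∃ x, (r - C y).IsRoot x := by
    apply Complex.isAlgClosed.exists_root
    have : 0 < (r - C y).natDegree := by rwa [natDegree_sub_C]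
    exact (natDegree_pos_iff_degree_pos.mp this).ne'
  have hx' : r.eval x = y := by
    have := hx
    simp only [IsRoot, eval_sub, eval_C, sub_eq_zero] at this
    exact this
  calc p.eval y = (p.comp r).eval x := by rw [eval_comp, hx']
    _ = (q.comp r).eval x := by rw [h]
    _ = q.eval y := by rw [eval_comp, hx']

private lemma core {a b c d : ℂ[X]} (hk : 0 < a.natDegree) (hm : 0 < b.natDegree)
    (hac : c.natDegree = a.natDegree) (hbd : d.natDegree = b.natDegree)
    (hb : b.Monic) (hd : d.Monic) (h : a.comp b = c.comp d) :
    ∃ t : ℂ, d = b + C t := by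
  set k := a.natDegree with hkdef
  set m := b.natDegree with hmdef
  set S : ℂ[X] := ∑ i ∈ Finset.range (k + 1),
      C (c.coeff i) * ∑ j ∈ Finset.range i, d ^ j * b ^ (i - 1 - j) with hSdef
  have hinner : ∀ i, ∀ j ∈ Finset.range i,
      (d ^ j * b ^ (i - 1 - j)).Monic ∧ (d ^ j * b ^ (i - 1 - j)).natDegree = (i - 1) * m := by
    intro i j hj
    have hj' : j < i := Finset.mem_range.mp hj
    have hmon : (d ^ j * b ^ (i - 1 - j)).Monic := (hd.pow _).mul (hb.pow _)
    refine ⟨hmon, ?_⟩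
    rw [(hd.pow _).natDegree_mul (hb.pow _), natDegree_pow, natDegree_pow, hbd, ← hmdef,
      ← add_mul]
    congr 1
    omega
  -- the inner sums
  have hinnersum : ∀ i ≤ k, (∑ j ∈ Finset.range i, d ^ j * b ^ (i - 1 - j)).natDegree
      ≤ (i - 1) * m := by
    intro i _
    apply natDegree_sum_le_of_forall_le
    intro j hj
    exact le_of_eq (hinner i j hj).2
  -- coefficient of S at (k-1)*m
  have hScoeff : S.coeff ((k - 1) * m) = c.coeff k * k := by
    rw [hSdef, finset_sum_coeff]
    rw [Finset.sum_eq_single k]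
    · rw [coeff_C_mul]
      congr 1
      rw [finset_sum_coeff]
      have : ∀ j ∈ Finset.range k, (d ^ j * b ^ (k - 1 - j)).coeff ((k - 1) * m) = 1 := by
        intro j hj
        have h1 := (hinner k j hj).1
        have h2 := (hinner k j hj).2
        rw [← h2]
        exact h1.coeff_natDegree
      rw [Finset.sum_congr rfl this, Finset.sum_const, Finset.card_range, nsmul_eq_mul, mul_one]
    · intro i hi hik
      have hi' : i < k + 1 := Finset.mem_range.mp hi
      rcases Nat.eq_zero_or_pos i with rfl | hipos
      · simp
      apply coeff_eq_zero_of_natDegree_lt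
      calc (C (c.coeff i) * ∑ j ∈ Finset.range i, d ^ j * b ^ (i - 1 - j)).natDegree
          ≤ (∑ j ∈ Finset.range i, d ^ j * b ^ (i - 1 - j)).natDegree := natDegree_C_mul_le _ _
        _ ≤ (i - 1) * m := hinnersum i (by omega)
        _ < (k - 1) * m := by
            have : i - 1 < k - 1 := by omega
            exact (Nat.mul_lt_mul_right hm).mpr this
    · intro hk'
      exact absurd (Finset.self_mem_range_succ k) hk'
  have hck : c.coeff k ≠ 0 := by
    have : c ≠ 0 := by
      intro h0
      rw [h0, natDegree_zero] at hac
      omega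
    have := mt leadingCoeff_eq_zero.mp this
    rwa [leadingCoeff, hac] at this
  have hSne : S ≠ 0 := by
    intro h0
    rw [h0, coeff_zero] at hScoeff
    have : (k : ℂ) ≠ 0 := Nat.cast_ne_zero.mpr (by omega)
    exact this (by
      rcases mul_eq_zero.mp hScoeff.symm with h' | h'
      · exact absurd h' hck
      · exact h')
  have hSdeg : S.natDegree = (k - 1) * m := by
    apply le_antisymm
    · apply natDegree_sum_le_of_forall_le
      intro i hi
      calc (C (c.coeff i) * ∑ j ∈ Finset.range i, d ^ j * b ^ (i - 1 - j)).natDegree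
          ≤ (∑ j ∈ Finset.range i, d ^ j * b ^ (i - 1 - j)).natDegree := natDegree_C_mul_le _ _
        _ ≤ (i - 1) * m := hinnersum i (by
            have := Finset.mem_range.mp hi; omega)
        _ ≤ (k - 1) * m := by
            have : i - 1 ≤ k - 1 := by
              have := Finset.mem_range.mp hi; omega
            exact Nat.mul_le_mul_right m this
    · apply le_natDegree_of_ne_zero
      rw [hScoeff]
      exact mul_ne_zero hck (Nat.cast_ne_zero.mpr (by omega))
  -- the factorization
  have hfac : c.comp d - c.comp b = (d - b) * S := by
    have hcompd : c.comp d = ∑ i ∈ Finset.range (k + 1), C (c.coeff i) * d ^ i := by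
      have : c.comp d = eval₂ C d c := rfl
      rw [this, eval₂_eq_sum_range, hac]
    have hcompb : c.comp b = ∑ i ∈ Finset.range (k + 1), C (c.coeff i) * b ^ i := by
      have : c.comp b = eval₂ C b c := rfl
      rw [this, eval₂_eq_sum_range, hac]
    rw [hcompd, hcompb, ← Finset.sum_sub_distrib, hSdef, Finset.mul_sum]
    apply Finset.sum_congr rfl
    intro i _
    rw [← mul_sub]
    have hgeom : d ^ i - b ^ i =
        (∑ j ∈ Finset.range i, d ^ j * b ^ (i - 1 - j)) * (d - b) := (geom_sum₂_mul d b i).symm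
    rw [hgeom]
    ring
  have hmain : (a - c).comp b = (d - b) * S := by
    rw [sub_comp, h, hfac]
  by_cases he : d - b = 0
  · exact ⟨0, by rw [map_zero, add_zero]; linear_combination he⟩
  · have hcompne : (a - c).comp b ≠ 0 := by
      rw [hmain]
      exact mul_ne_zero he hSne
    have hacne : a - c ≠ 0 := by
      intro h0
      rw [h0, zero_comp] at hcompne
      exact hcompne rfl
    have hdeg : (a - c).natDegree * m = (d - b).natDegree + (k - 1) * m := by
      have := congrArg natDegree hmain
      rwa [natDegree_comp, natDegree_mul he hSne, hSdeg, ← hmdef] at this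
    have hlt : (d - b).natDegree < m := by
      have hdb : d.degree = b.degree := by
        rw [degree_eq_natDegree hd.ne_zero, degree_eq_natDegree hb.ne_zero, hbd]
      have := degree_sub_lt hdb hd.ne_zero (by rw [hd.leadingCoeff, hb.leadingCoeff])
      have := natDegree_lt_natDegree he this
      rwa [hbd] at this
    -- conclude (d-b).natDegree = 0
    have hr0 : (d - b).natDegree = 0 := by
      set q := (a - c).natDegree with hq
      set r := (d - b).natDegree with hrdef
      have hqk : k - 1 ≤ q := by
        by_contra hcon
        push_neg at hcon
        have : q * m < (k - 1) * m := (Nat.mul_lt_mul_right hm).mpr hcon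
        omega
      have : r = (q - (k - 1)) * m := by
        rw [Nat.sub_mul]
        omega
      rcases Nat.eq_zero_or_pos (q - (k - 1)) with h0 | h0
      · rw [h0, zero_mul] at this; exact this
      · exfalso
        have : m ≤ (q - (k - 1)) * m := Nat.le_mul_of_pos_left m h0
        omega
    refine ⟨(d - b).coeff 0, ?_⟩
    have := eq_C_of_natDegree_eq_zero hr0
    linear_combination this

private lemma uniq {a b c d : ℂ[X]} (hk : 0 < a.natDegree) (hm : 0 < b.natDegree)
    (hac : c.natDegree = a.natDegree) (hbd : d.natDegree = b.natDegree)
    (h : a.comp b = c.comp d) :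
    ∃ ℓ ℓinv : ℂ[X], ℓ.natDegree = 1 ∧ ℓ.comp ℓinv = X ∧ ℓinv.comp ℓ = X ∧
      a = c.comp ℓ ∧ b = ℓinv.comp d := by
  have hb0 : b ≠ 0 := fun h0 => by simp [h0] at hm
  have hd0 : d ≠ 0 := by
    intro h0
    rw [h0, natDegree_zero] at hbd
    omega
  set β := b.leadingCoeff with hβdef
  set δ := d.leadingCoeff with hδdef
  have hβ : β ≠ 0 := leadingCoeff_ne_zero.mpr hb0
  have hδ : δ ≠ 0 := leadingCoeff_ne_zero.mpr hd0
  set b₁ : ℂ[X] := C β⁻¹ * b with hb₁def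
  set d₁ : ℂ[X] := C δ⁻¹ * d with hd₁def
  set a₁ : ℂ[X] := a.comp (C β * X) with ha₁def
  set c₁ : ℂ[X] := c.comp (C δ * X) with hc₁def
  have hβb : (C β * X).comp b₁ = b := by
    rw [mul_comp, C_comp, X_comp, hb₁def, ← mul_assoc, ← C_mul, mul_inv_cancel₀ hβ, C_1, one_mul]
  have hδd : (C δ * X).comp d₁ = d := by
    rw [mul_comp, C_comp, X_comp, hd₁def, ← mul_assoc, ← C_mul, mul_inv_cancel₀ hδ, C_1, one_mul]
  have hab : a₁.comp b₁ = a.comp b := by rw [ha₁def, comp_assoc, hβb]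
  have hcd : c₁.comp d₁ = c.comp d := by rw [hc₁def, comp_assoc, hδd]
  have hb₁m : b₁.Monic := by
    unfold Monic
    rw [hb₁def, leadingCoeff_mul, leadingCoeff_C, inv_mul_cancel₀ hβ]
  have hd₁m : d₁.Monic := by
    unfold Monic
    rw [hd₁def, leadingCoeff_mul, leadingCoeff_C, inv_mul_cancel₀ hδ]
  have hb₁deg : b₁.natDegree = b.natDegree := natDegree_C_mul (inv_ne_zero hβ)
  have hd₁deg : d₁.natDegree = d.natDegree := natDegree_C_mul (inv_ne_zero hδ)
  have ha₁deg : a₁.natDegree = a.natDegree := by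
    rw [ha₁def, natDegree_comp, natDegree_C_mul_X _ hβ, mul_one]
  have hc₁deg : c₁.natDegree = c.natDegree := by
    rw [hc₁def, natDegree_comp, natDegree_C_mul_X _ hδ, mul_one]
  obtain ⟨t, ht⟩ : ∃ t : ℂ, d₁ = b₁ + C t := by
    apply core (a := a₁) (b := b₁) (c := c₁) (d := d₁)
    · rwa [ha₁deg]
    · rwa [hb₁deg]
    · rw [hc₁deg, ha₁deg, hac]
    · rw [hd₁deg, hb₁deg, hbd]
    · exact hb₁m
    · exact hd₁m
    · rw [hab, hcd, h]
  have ha₁ : a₁ = c₁.comp (X + C t) := by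
    apply comp_right_cancel (r := b₁) (by rwa [hb₁deg])
    rw [comp_assoc c₁, add_comp, X_comp, C_comp, ← ht, hab, hcd, h]
  refine ⟨C (δ / β) * X + C (δ * t), C (β / δ) * X - C (β * t), ?_, ?_, ?_, ?_, ?_⟩
  · rw [natDegree_add_C, natDegree_C_mul_X _ (div_ne_zero hδ hβ)]
  · apply Polynomial.funext
    intro x
    simp only [eval_comp, eval_add, eval_sub, eval_mul, eval_C, eval_X]
    field_simp
    ring
  · apply Polynomial.funext
    intro x
    simp only [eval_comp, eval_add, eval_sub, eval_mul, eval_C, eval_X]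
    field_simp
    ring
  · -- a = c.comp ℓ
    apply comp_right_cancel (r := C β * X) (by rw [natDegree_C_mul_X _ hβ]; omega)
    have hstep : (C (δ / β) * X + C (δ * t)).comp (C β * X) = C δ * X + C (δ * t) := by
      simp only [add_comp, mul_comp, C_comp, X_comp]
      rw [← mul_assoc, ← C_mul, div_mul_cancel₀ _ hβ]
    rw [comp_assoc c, hstep, ← ha₁def, ha₁, hc₁def, comp_assoc c]
    congr 1
    rw [mul_comp, C_comp, X_comp, mul_add, ← C_mul]
  · -- b = ℓinv.comp d
    simp only [sub_comp, mul_comp, C_comp, X_comp]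
    have hd' : d = C δ * d₁ := by
      rw [hd₁def, ← mul_assoc, ← C_mul, mul_inv_cancel₀ hδ, C_1, one_mul]
    rw [hd', ht, hb₁def]
    have e1 : C (β / δ) * C δ * C β⁻¹ = (1 : ℂ[X]) := by
      rw [← C_mul, ← C_mul, ← C_1]
      congr 1
      field_simp
    have e2 : C (β / δ) * C δ * C t = C (β * t) := by
      rw [← C_mul, ← C_mul]
      congr 1
      field_simp
    linear_combination (-b) * e1 - e2

private lemma chebT_spec : ∀ n : ℕ, (chebT n).natDegree = n ∧ (0 < n → (chebT n).Monic)
  | 0 => by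
    constructor
    · show (dickson 1 (1 : ℂ) 0).natDegree = 0
      rw [dickson_zero]
      norm_num
    · omega
  | 1 => by
    constructor
    · show (dickson 1 (1 : ℂ) 1).natDegree = 1
      rw [dickson_one]
      exact natDegree_X
    · intro _
      show (dickson 1 (1 : ℂ) 1).Monic
      rw [dickson_one]
      exact monic_X
  | (n + 2) => by
    have ih1 := chebT_spec (n + 1)
    have ih0 := chebT_spec n
    have hrec : chebT (n + 2) = X * chebT (n + 1) - chebT n := by
      show dickson 1 (1 : ℂ) (n + 2) = X * dickson 1 (1 : ℂ) (n + 1) - dickson 1 (1 : ℂ) n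
      rw [dickson_add_two, C_1, one_mul]
    have hmon1 : (chebT (n + 1)).Monic := ih1.2 (Nat.succ_pos n)
    have hpmon : (X * chebT (n + 1)).Monic := monic_X.mul hmon1
    have hpdeg : (X * chebT (n + 1)).natDegree = n + 2 := by
      rw [monic_X.natDegree_mul hmon1, natDegree_X, ih1.1]
      omega
    have hlt : (chebT n).degree < (X * chebT (n + 1)).degree := by
      rw [degree_eq_natDegree hpmon.ne_zero, hpdeg]
      apply lt_of_le_of_lt degree_le_natDegree
      rw [ih0.1]
      exact_mod_cast (by omega : n < n + 2)
    constructor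
    · rw [hrec]
      have : (X * chebT (n + 1) - chebT n).degree = (X * chebT (n + 1)).degree := by
        rw [sub_eq_add_neg]
        rw [degree_add_eq_left_of_degree_lt (by rwa [degree_neg])]
      rw [natDegree_eq_of_degree_eq this, hpdeg]
    · intro _
      rw [hrec]
      exact hpmon.sub_of_left hlt

theorem decompositions_of_power_and_chebyshev :
    (∀ (n : ℕ) (a b : ℂ[X]), 0 < a.natDegree → 0 < b.natDegree →
      a.comp b = Polynomial.X ^ n →
      a.natDegree ∣ n ∧
        ∃ ℓ ℓinv : ℂ[X], ℓ.natDegree = 1 ∧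
          ℓ.comp ℓinv = Polynomial.X ∧ ℓinv.comp ℓ = Polynomial.X ∧
          a = (Polynomial.X ^ a.natDegree).comp ℓ ∧
          b = ℓinv.comp (Polynomial.X ^ (n / a.natDegree))) ∧
    (∀ (n : ℕ) (a b : ℂ[X]), 0 < a.natDegree → 0 < b.natDegree →
      a.comp b = chebT n →
      a.natDegree ∣ n ∧
        ∃ ℓ ℓinv : ℂ[X], ℓ.natDegree = 1 ∧
          ℓ.comp ℓinv = Polynomial.X ∧ ℓinv.comp ℓ = Polynomial.X ∧
          a = (chebT a.natDegree).comp ℓ ∧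
          b = ℓinv.comp (chebT (n / a.natDegree))) := by
  constructor
  · intro n a b ha hb h
    have hn : a.natDegree * b.natDegree = n := by
      have := congrArg natDegree h
      rwa [natDegree_comp, natDegree_X_pow] at this
    have hdvd : a.natDegree ∣ n := Dvd.intro _ hn
    have hdiv : n / a.natDegree = b.natDegree := by
      rw [← hn, Nat.mul_div_cancel_left _ ha]
    refine ⟨hdvd, ?_⟩
    rw [hdiv]
    apply uniq ha hb
    · rw [natDegree_X_pow]
    · rw [natDegree_X_pow]
    · rw [h, pow_comp, X_comp, ← pow_mul, mul_comm, hn]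
  · intro n a b ha hb h
    have hn : a.natDegree * b.natDegree = n := by
      have := congrArg natDegree h
      rwa [natDegree_comp, (chebT_spec n).1] at this
    have hdvd : a.natDegree ∣ n := Dvd.intro _ hn
    have hdiv : n / a.natDegree = b.natDegree := by
      rw [← hn, Nat.mul_div_cancel_left _ ha]
    refine ⟨hdvd, ?_⟩
    rw [hdiv]
    apply uniq ha hb
    · rw [(chebT_spec _).1]
    · rw [(chebT_spec _).1]
    · rw [h, ← hn]
      simp only [chebT]
      exact dickson_one_one_mul (R := ℂ) _ _
end

section
/- Pick integers m, n and linear ℓ, ℓ_1, ℓ_2 ∈ ℂ[X]. If m, n > 1 and X^m ∘ ℓ ∘ X^n = ℓ_1 ∘ X^{mn} ∘ ℓ_2, then ℓ = αX for some α ∈ ℂ^×. If m, n > 2 and T_m ∘ ℓ ∘ T_n = ℓ_1 ∘ T_{mn} ∘ ℓ_2, then ℓ = εX for some ε ∈ {1, −1}. -/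
open Polynomial

section Helpers

private lemma two_step {P : ℕ → Prop} (h0 : P 0) (h1 : P 1)
    (ih : ∀ k, P k → P (k+1) → P (k+2)) : ∀ k, P k := by
  have H : ∀ k, P k ∧ P (k+1) := by
    intro k
    induction k with
    | zero => exact ⟨h0, h1⟩
    | succ n h => exact ⟨h.2, ih n h.1 h.2⟩
  exact fun k => (H k).1

private lemma chebT_add_two (k : ℕ) : chebT (k+2) = X * chebT (k+1) - chebT k := by
  simp [chebT, Polynomial.dickson_add_two]

private lemma chebT_zero : chebT 0 = 2 := by
  simp [chebT]; norm_num

private lemma chebT_one : chebT 1 = X := by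
  simp [chebT]

private lemma chebT_two : chebT 2 = X^2 - 2 := by
  have h := chebT_add_two 0
  rw [h, chebT_one, chebT_zero]; ring

private lemma chebT_three : chebT 3 = X^3 - 3*X := by
  have h := chebT_add_two 1
  rw [h, chebT_two, chebT_one]; ring

private lemma chebT_four : chebT 4 = X^4 - 4*X^2 + 2 := by
  have h := chebT_add_two 2
  rw [h, chebT_three, chebT_two]; ring

private lemma chebT_struct : ∀ k : ℕ, ∃ s : ℂ[X],
    chebT (k+3) = X^(k+3) - C ((k:ℂ)+3) * X^(k+1) + s ∧ s.natDegree ≤ k := by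
  apply two_step
  · refine ⟨0, ?_, by simp⟩
    rw [chebT_three]
    simp only [Nat.cast_zero, zero_add, map_ofNat, Nat.cast_ofNat, pow_one]
    ring
  · refine ⟨C 2, ?_, by simp⟩
    rw [chebT_four]
    simp only [Nat.cast_one, map_add, map_ofNat, map_one]
    ring
  · rintro k ⟨s, hs, hd⟩ ⟨s', hs', hd'⟩
    refine ⟨X * s' + C ((k:ℂ)+3) * X^(k+1) - s, ?_, ?_⟩
    · have h := chebT_add_two (k+3)
      have e1 : k+3+2 = k+2+3 := by omega
      have e2 : k+3+1 = k+1+3 := by omega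
      rw [e1, e2] at h
      rw [h, hs, hs']
      push_cast
      simp only [map_add, map_ofNat, map_one]
      ring
    · refine (natDegree_sub_le _ _).trans
        (max_le ((natDegree_add_le _ _).trans (max_le ?_ ?_)) (hd.trans (by omega)))
      · exact natDegree_mul_le.trans (by simp [natDegree_X]; omega)
      · exact (natDegree_C_mul_le _ _).trans (by simp)

private lemma chebT_struct' (k : ℕ) (hk : 3 ≤ k) : ∃ s : ℂ[X],
    chebT k = X^k - C (k:ℂ) * X^(k-2) + s ∧ s.natDegree ≤ k - 3 := by
  obtain ⟨j, rfl⟩ : ∃ j, k = j+3 := ⟨k-3, by omega⟩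
  obtain ⟨s, hs, hd⟩ := chebT_struct j
  refine ⟨s, ?_, by omega⟩
  rw [hs]
  congr 2
  push_cast; ring

private lemma chebT_natDegree (k : ℕ) (hk : 3 ≤ k) : (chebT k).natDegree = k := by
  obtain ⟨s, hs, hd⟩ := chebT_struct' k hk
  rw [hs]
  have h1 : (C (k:ℂ) * X^(k-2)).natDegree < (X^k : ℂ[X]).natDegree := by
    refine lt_of_le_of_lt (natDegree_C_mul_le _ _) ?_
    simp [natDegree_X_pow]; omega
  have h2 : (X^k - C (k:ℂ) * X^(k-2) : ℂ[X]).natDegree = k := by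
    rw [sub_eq_add_neg, natDegree_add_eq_left_of_natDegree_lt (by simpa using h1),
      natDegree_X_pow]
  rw [natDegree_add_eq_left_of_natDegree_lt (by rw [h2]; omega), h2]

private lemma chebT_coeff_top (k : ℕ) (hk : 3 ≤ k) : (chebT k).coeff k = 1 := by
  obtain ⟨s, hs, hd⟩ := chebT_struct' k hk
  rw [hs, coeff_add, coeff_sub, coeff_X_pow, if_pos rfl, coeff_C_mul, coeff_X_pow,
    if_neg (by omega), coeff_eq_zero_of_natDegree_lt (by omega)]
  ring

private lemma chebT_monic (k : ℕ) (hk : 3 ≤ k) : (chebT k).Monic := by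
  rw [Monic, leadingCoeff, chebT_natDegree k hk]
  exact chebT_coeff_top k hk

private lemma chebT_coeff_sub1 (k : ℕ) (hk : 3 ≤ k) : (chebT k).coeff (k-1) = 0 := by
  obtain ⟨s, hs, hd⟩ := chebT_struct' k hk
  rw [hs, coeff_add, coeff_sub, coeff_X_pow, if_neg (by omega), coeff_C_mul, coeff_X_pow,
    if_neg (by omega), coeff_eq_zero_of_natDegree_lt (by omega)]
  ring

private lemma chebT_coeff_sub2 (k : ℕ) (hk : 3 ≤ k) : (chebT k).coeff (k-2) = -(k:ℂ) := by
  obtain ⟨s, hs, hd⟩ := chebT_struct' k hk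
  rw [hs, coeff_add, coeff_sub, coeff_X_pow, if_neg (by omega), coeff_C_mul, coeff_X_pow,
    if_pos rfl, coeff_eq_zero_of_natDegree_lt (by omega)]
  ring

private lemma chebT_comp_neg : ∀ k, (chebT k).comp (-X) = C ((-1:ℂ)^k) * chebT k := by
  apply two_step
  · simp [chebT_zero]
  · simp [chebT_one]
  · intro k h1 h2
    rw [chebT_add_two, sub_comp, mul_comp, X_comp, h1, h2]
    simp only [pow_succ, map_mul, map_neg, map_one]
    ring

private lemma chebT_mul (m n : ℕ) : chebT (m*n) = (chebT m).comp (chebT n) :=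
  Polynomial.dickson_one_one_mul (R := ℂ) m n

private lemma pow_coeff_low (p : ℂ[X]) (h0 : p.coeff 0 = 1) (h1 : p.coeff 1 = 0) :
    ∀ i : ℕ, (p^i).coeff 0 = 1 ∧ (p^i).coeff 1 = 0 ∧ (p^i).coeff 2 = (i:ℂ) * p.coeff 2 := by
  intro i
  induction i with
  | zero => simp [coeff_one]
  | succ i ih =>
    obtain ⟨e0, e1, e2⟩ := ih
    rw [pow_succ]
    refine ⟨by rw [mul_coeff_zero, e0, h0, one_mul], ?_, ?_⟩
    · rw [coeff_mul, Finset.Nat.sum_antidiagonal_eq_sum_range_succ_mk]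
      simp [Finset.sum_range_succ, e0, e1, h0, h1]
    · rw [coeff_mul, Finset.Nat.sum_antidiagonal_eq_sum_range_succ_mk]
      simp [Finset.sum_range_succ, e0, e1, e2, h0, h1]
      ring

private lemma reverse_pow (q : ℂ[X]) : ∀ i, (q^i).reverse = q.reverse ^ i
  | 0 => by rw [pow_zero, pow_zero, ← C_1, reverse_C]
  | i+1 => by rw [pow_succ, reverse_mul_of_domain, reverse_pow q i, pow_succ]

private lemma pow_coeff_high (q : ℂ[X]) (n : ℕ) (hmo : q.Monic) (hn : q.natDegree = n)
    (h2 : 2 ≤ n) (h1 : q.coeff (n-1) = 0) (i : ℕ) (hi : 1 ≤ i) :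
    (q^i).coeff (i*n) = 1 ∧ (q^i).coeff (i*n - 1) = 0 ∧
    (q^i).coeff (i*n - 2) = (i:ℂ) * q.coeff (n-2) := by
  have hr0 : q.reverse.coeff 0 = 1 := by
    rw [coeff_reverse, revAt_le (Nat.zero_le _), tsub_zero, hn, ← hn]
    exact hmo.coeff_natDegree
  have hr1 : q.reverse.coeff 1 = 0 := by
    rw [coeff_reverse, revAt_le (by omega), hn]
    exact h1
  have hr2 : q.reverse.coeff 2 = q.coeff (n-2) := by
    rw [coeff_reverse, revAt_le (by omega), hn]
  obtain ⟨l0, l1, l2⟩ := pow_coeff_low q.reverse hr0 hr1 i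
  have hdeg : (q^i).natDegree = i * n := by rw [hmo.natDegree_pow, hn]
  have key : ∀ j, j ≤ i*n → (q^i).coeff (i*n - j) = (q.reverse ^ i).coeff j := by
    intro j hj
    rw [← reverse_pow, coeff_reverse, hdeg, revAt_le hj]
  have hin : 2 ≤ i * n := le_trans h2 (Nat.le_mul_of_pos_left n (by omega))
  refine ⟨?_, ?_, ?_⟩
  · have h := key 0 (by omega); rw [tsub_zero] at h; rw [h, l0]
  · rw [key 1 (by omega), l1]
  · rw [key 2 (by omega), l2, hr2]

private lemma binom_pow_expand (d e : ℂ) (t i : ℕ) :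
    (C d * X^t + C e)^i =
      ∑ k ∈ Finset.range (i+1), C (d^k * e^(i-k) * (i.choose k)) * X^(t*k) := by
  rw [add_pow]
  refine Finset.sum_congr rfl fun k _ => ?_
  rw [mul_pow, ← C_pow, ← C_pow, ← pow_mul]
  simp only [map_mul, map_natCast, C_pow]
  ring

private lemma binom_pow_coeff_not_dvd (d e : ℂ) (t i j : ℕ) (hj : ¬ t ∣ j) :
    ((C d * X^t + C e)^i).coeff j = 0 := by
  rw [binom_pow_expand, finset_sum_coeff]
  refine Finset.sum_eq_zero fun k _ => ?_
  rw [coeff_C_mul, coeff_X_pow, if_neg (fun h => hj ⟨k, h⟩), mul_zero]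

private lemma binom_pow_coeff (d e : ℂ) (t i j : ℕ) (ht : 1 ≤ t) (hj : j ≤ i) :
    ((C d * X^t + C e)^i).coeff (t*j) = d^j * e^(i-j) * (i.choose j) := by
  rw [binom_pow_expand, finset_sum_coeff, Finset.sum_eq_single j]
  · rw [coeff_C_mul, coeff_X_pow, if_pos rfl, mul_one]
  · intro k _ hkj
    rw [coeff_C_mul, coeff_X_pow, if_neg, mul_zero]
    intro h
    exact hkj (Nat.eq_of_mul_eq_mul_left (by omega) h.symm)
  · intro h
    exact absurd (Finset.mem_range.2 (by omega)) h

private lemma linear_pow_coeff (d e : ℂ) (i j : ℕ) (hj : j ≤ i) :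
    ((C d * X + C e)^i).coeff j = d^j * e^(i-j) * (i.choose j) := by
  have h := binom_pow_coeff d e 1 i j le_rfl hj
  simpa using h

private lemma linear_pow_natDegree_le (d e : ℂ) (i : ℕ) :
    ((C d * X + C e)^i).natDegree ≤ i := by
  refine natDegree_pow_le.trans ?_
  have h : (C d * X + C e : ℂ[X]).natDegree ≤ 1 :=
    (natDegree_add_le _ _).trans (max_le ((natDegree_C_mul_le _ _).trans (by simp)) (by simp))
  calc i * (C d * X + C e : ℂ[X]).natDegree ≤ i * 1 := Nat.mul_le_mul_left i h
  _ = i := Nat.mul_one i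

private lemma comp_coeff_high (p q : ℂ[X]) (N : ℕ) (hN : (p.natDegree - 1) * q.natDegree < N) :
    (p.comp q).coeff N = p.leadingCoeff * (q ^ p.natDegree).coeff N := by
  rw [comp_eq_sum_left, Polynomial.sum_def, finset_sum_coeff, Finset.sum_eq_single p.natDegree]
  · rw [coeff_C_mul]; rfl
  · intro i hi hne
    have hile : i ≤ p.natDegree := le_natDegree_of_mem_supp i hi
    have hlt : (q^i).natDegree < N :=
      lt_of_le_of_lt (natDegree_pow_le.trans (Nat.mul_le_mul_right _ (by omega))) hN
    rw [coeff_C_mul, coeff_eq_zero_of_natDegree_lt hlt, mul_zero]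
  · intro h
    rw [notMem_support_iff.mp h, map_zero, zero_mul, coeff_zero]

private lemma lin_decomp (p : ℂ[X]) (hp : p.natDegree = 1) :
    ∃ u v : ℂ, u ≠ 0 ∧ p = C u * X + C v := by
  refine ⟨p.coeff 1, p.coeff 0, ?_, eq_X_add_C_of_natDegree_le_one hp.le⟩
  intro h
  have h0 : p.leadingCoeff = 0 := by rwa [leadingCoeff, hp]
  rw [leadingCoeff_eq_zero] at h0
  rw [h0] at hp
  simp at hp

end Helpers

theorem middle_linear_is_scalar
    (m n : ℕ) (ℓ ℓ₁ ℓ₂ : ℂ[X])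
    (hℓ : ℓ.natDegree = 1) (hℓ₁ : ℓ₁.natDegree = 1) (hℓ₂ : ℓ₂.natDegree = 1) :
    (1 < m → 1 < n →
      (Polynomial.X ^ m).comp (ℓ.comp (Polynomial.X ^ n)) =
        ℓ₁.comp ((Polynomial.X ^ (m * n)).comp ℓ₂) →
      ∃ α : ℂ, α ≠ 0 ∧ ℓ = Polynomial.C α * Polynomial.X) ∧
    (2 < m → 2 < n →
      (chebT m).comp (ℓ.comp (chebT n)) = ℓ₁.comp ((chebT (m * n)).comp ℓ₂) →
      ℓ = Polynomial.X ∨ ℓ = -Polynomial.X) := by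
  obtain ⟨a, b, ha, hℓd⟩ := lin_decomp ℓ hℓ
  obtain ⟨c, f, hc, hℓ₁d⟩ := lin_decomp ℓ₁ hℓ₁
  obtain ⟨d, e, hd, hℓ₂d⟩ := lin_decomp ℓ₂ hℓ₂
  constructor
  · -- power case
    intro hm hn heq
    have hnm : n ≤ m*n := Nat.le_mul_of_pos_left n (by omega)
    have hmn4 : 4 ≤ m*n := by
      have h22 := Nat.mul_le_mul (show 2 ≤ m by omega) (show 2 ≤ n by omega)
      omega
    have hmn2n : 2*n ≤ m*n := Nat.mul_le_mul_right n (by omega)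
    -- normalize equation
    have hL : (X^m : ℂ[X]).comp (ℓ.comp (X^n)) = (C a * X^n + C b)^m := by
      rw [hℓd]
      simp [pow_comp, add_comp, mul_comp, C_comp, X_comp]
    have hR : ℓ₁.comp ((X^(m*n) : ℂ[X]).comp ℓ₂) = C c * (C d * X + C e)^(m*n) + C f := by
      rw [hℓ₁d, hℓ₂d]
      simp [pow_comp, add_comp, mul_comp, C_comp, X_comp]
    rw [hL, hR] at heq
    -- coefficient at m*n - 1 : e = 0
    have hndvd : ¬ n ∣ m*n - 1 := by
      intro hdvd
      have h2 : n ∣ m*n := Dvd.intro_left m rfl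
      have h3 : n ∣ m*n - (m*n-1) := Nat.dvd_sub h2 hdvd
      have h5 : m*n - (m*n-1) = 1 := by omega
      rw [h5] at h3
      have := Nat.le_of_dvd one_pos h3
      omega
    have hc1 := congrArg (fun p : ℂ[X] => p.coeff (m*n-1)) heq
    simp only [coeff_add, coeff_C_mul] at hc1
    rw [binom_pow_coeff_not_dvd a b n m _ hndvd,
      linear_pow_coeff d e (m*n) (m*n-1) (by omega),
      coeff_C, if_neg (by omega)] at hc1
    rw [show m*n - (m*n-1) = 1 by omega, pow_one,
      Nat.choose_symm (show 1 ≤ m*n by omega),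
      Nat.choose_one_right] at hc1
    have he : e = 0 := by
      have h6 := hc1.symm
      rw [add_zero] at h6
      rcases mul_eq_zero.mp h6 with h|h
      · exact absurd h hc
      rcases mul_eq_zero.mp h with h'|h'
      · rcases mul_eq_zero.mp h' with h''|h''
        · exact absurd h'' (pow_ne_zero _ hd)
        · exact h''
      · exact absurd h' (Nat.cast_ne_zero.mpr (by omega))
    subst he
    -- coefficient at n*(m-1) : b = 0
    have hkey : n*(m-1) + n = m*n := by
      have hm1 : (m - 1).succ = m := by omega
      rw [← Nat.mul_succ, hm1, Nat.mul_comm]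
    have hc2 := congrArg (fun p : ℂ[X] => p.coeff (n*(m-1))) heq
    simp only [coeff_add, coeff_C_mul] at hc2
    rw [binom_pow_coeff a b n m (m-1) (by omega) (by omega),
      linear_pow_coeff d 0 (m*n) (n*(m-1)) (by omega),
      coeff_C, if_neg (by omega)] at hc2
    rw [show m - (m-1) = 1 by omega, pow_one,
      Nat.choose_symm (show 1 ≤ m by omega),
      Nat.choose_one_right,
      show m*n - n*(m-1) = n by omega,
      zero_pow (show n ≠ 0 by omega)] at hc2
    have hb : b = 0 := by
      simp only [mul_zero, zero_mul, add_zero] at hc2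
      rcases mul_eq_zero.mp hc2 with h|h
      · rcases mul_eq_zero.mp h with h'|h'
        · exact absurd h' (pow_ne_zero _ ha)
        · exact h'
      · exact absurd h (Nat.cast_ne_zero.mpr (by omega))
    exact ⟨a, ha, by rw [hℓd, hb, map_zero, add_zero]⟩
  · -- Chebyshev case
    intro hm hn heq
    have hm3 : 3 ≤ m := by omega
    have hn3 : 3 ≤ n := by omega
    have hnm : n ≤ m*n := Nat.le_mul_of_pos_left n (by omega)
    have hmm : m ≤ m*n := Nat.le_mul_of_pos_right m (by omega)
    have h9 : 9 ≤ m*n := by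
      have h33 := Nat.mul_le_mul hm3 hn3
      omega
    have hsub1 : (m-1)*n + n = m*n := by
      have hm1 : (m - 1).succ = m := by omega
      rw [← Nat.succ_mul, hm1]
    have hTn_deg := chebT_natDegree n hn3
    have hTn_mon := chebT_monic n hn3
    have hTn_sub1 := chebT_coeff_sub1 n hn3
    have hTn_sub2 := chebT_coeff_sub2 n hn3
    -- left side
    have hAdeg : ((chebT m).comp ℓ).natDegree = m := by
      rw [natDegree_comp, chebT_natDegree m hm3, hℓ, mul_one]
    have hAlead : ((chebT m).comp ℓ).leadingCoeff = a^m := by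
      rw [leadingCoeff_comp (by rw [hℓ]; exact one_ne_zero), chebT_natDegree m hm3,
        (chebT_monic m hm3).leadingCoeff, one_mul]
      have hla : ℓ.leadingCoeff = a := by
        rw [hℓd]
        simpa using leadingCoeff_linear ha
      rw [hla]
    obtain ⟨lo0, lo1, lo2⟩ :=
      pow_coeff_high (chebT n) n hTn_mon hTn_deg (by omega) hTn_sub1 m (by omega)
    rw [← comp_assoc] at heq
    have hLcoeff : ∀ N, (m-1)*n < N →
        (((chebT m).comp ℓ).comp (chebT n)).coeff N = a^m * ((chebT n)^m).coeff N := by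
      intro N hN
      rw [comp_coeff_high _ _ _ (by rw [hAdeg, hTn_deg]; exact hN), hAdeg, hAlead]
    -- right side
    obtain ⟨s, hsEq, hsdeg⟩ := chebT_struct' (m*n) (by omega)
    have hRHS : ℓ₁.comp ((chebT (m*n)).comp ℓ₂) = C c * ((chebT (m*n)).comp ℓ₂) + C f := by
      conv_lhs => rw [hℓ₁d]
      simp [add_comp, mul_comp, C_comp, X_comp]
    rw [hRHS] at heq
    have hB : (chebT (m*n)).comp ℓ₂ =
        ℓ₂^(m*n) - C ((m*n : ℕ):ℂ) * ℓ₂^(m*n-2) + s.comp ℓ₂ := by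
      rw [hsEq]
      simp [add_comp, sub_comp, mul_comp, C_comp, pow_comp, X_comp]
    have l2pow : ∀ K j : ℕ, j ≤ K → (ℓ₂^K).coeff j = d^j * e^(K-j) * (K.choose j) := by
      intro K j hj
      rw [hℓ₂d]
      exact linear_pow_coeff d e K j hj
    have l2deg : ∀ K : ℕ, (ℓ₂^K).natDegree ≤ K := by
      intro K
      rw [hℓ₂d]
      exact linear_pow_natDegree_le d e K
    have hscomp : (s.comp ℓ₂).natDegree ≤ m*n - 3 := by
      rw [natDegree_comp, hℓ₂, mul_one]
      exact hsdeg
    -- coefficient at m*n - 1 : e = 0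
    have hB1 : ((chebT (m*n)).comp ℓ₂).coeff (m*n-1) = d^(m*n-1) * e * ((m*n : ℕ) : ℂ) := by
      rw [hB, coeff_add, coeff_sub, l2pow _ _ (by omega), coeff_C_mul,
        coeff_eq_zero_of_natDegree_lt ((l2deg _).trans_lt (show m*n-2 < m*n-1 by omega)),
        coeff_eq_zero_of_natDegree_lt (hscomp.trans_lt (show m*n-3 < m*n-1 by omega)),
        show m*n - (m*n-1) = 1 by omega, pow_one,
        Nat.choose_symm (show 1 ≤ m*n by omega), Nat.choose_one_right]
      ring
    have hc1 := congrArg (fun p : ℂ[X] => p.coeff (m*n-1)) heq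
    simp only [coeff_add, coeff_C_mul] at hc1
    rw [hLcoeff _ (by omega), lo1, mul_zero, hB1, coeff_C, if_neg (by omega), add_zero] at hc1
    have he : e = 0 := by
      rcases mul_eq_zero.mp hc1.symm with h|h
      · exact absurd h hc
      rcases mul_eq_zero.mp h with h'|h'
      · rcases mul_eq_zero.mp h' with h''|h''
        · exact absurd h'' (pow_ne_zero _ hd)
        · exact h''
      · exact absurd h' (Nat.cast_ne_zero.mpr (by omega))
    subst he
    -- coefficient at m*n : a^m = c * d^(m*n)
    have hBtop : ((chebT (m*n)).comp ℓ₂).coeff (m*n) = d^(m*n) := by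
      rw [hB, coeff_add, coeff_sub, l2pow _ _ le_rfl, coeff_C_mul,
        coeff_eq_zero_of_natDegree_lt ((l2deg _).trans_lt (show m*n-2 < m*n by omega)),
        coeff_eq_zero_of_natDegree_lt (hscomp.trans_lt (show m*n-3 < m*n by omega)),
        Nat.sub_self, pow_zero, Nat.choose_self]
      ring
    have hc0 := congrArg (fun p : ℂ[X] => p.coeff (m*n)) heq
    simp only [coeff_add, coeff_C_mul] at hc0
    rw [hLcoeff _ (by omega), lo0, mul_one, hBtop, coeff_C, if_neg (by omega), add_zero] at hc0
    -- coefficient at m*n - 2 : a^m = c * d^(m*n-2)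
    have hB2 : ((chebT (m*n)).comp ℓ₂).coeff (m*n-2) = -(((m*n : ℕ):ℂ)) * d^(m*n-2) := by
      rw [hB, coeff_add, coeff_sub, l2pow _ _ (by omega), coeff_C_mul,
        l2pow _ _ le_rfl,
        coeff_eq_zero_of_natDegree_lt (hscomp.trans_lt (show m*n-3 < m*n-2 by omega)),
        show m*n - (m*n-2) = 2 by omega, zero_pow (two_ne_zero),
        Nat.sub_self, pow_zero, Nat.choose_self]
      ring
    have hc2 := congrArg (fun p : ℂ[X] => p.coeff (m*n-2)) heq
    simp only [coeff_add, coeff_C_mul] at hc2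
    rw [hLcoeff _ (by omega), lo2, hTn_sub2, hB2, coeff_C, if_neg (by omega), add_zero] at hc2
    have hcd2 : a^m = c * d^(m*n-2) := by
      have hmn0 : ((m:ℕ):ℂ) * ((n:ℕ):ℂ) ≠ 0 := by
        have hm0 : ((m:ℕ):ℂ) ≠ 0 := Nat.cast_ne_zero.mpr (by omega)
        have hn0 : ((n:ℕ):ℂ) ≠ 0 := Nat.cast_ne_zero.mpr (by omega)
        exact mul_ne_zero hm0 hn0
      push_cast at hc2
      apply mul_right_cancel₀ hmn0
      linear_combination -hc2
    have hd2 : d^2 = 1 := by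
      have h1 : c * d^(m*n) = c * d^(m*n-2) := by rw [← hc0, ← hcd2]
      have h2 : d^(m*n) = d^(m*n-2) * d^2 := by
        rw [← pow_add]
        congr 1
        omega
      rw [h2] at h1
      have h3 := mul_left_cancel₀ hc h1
      have h4 : d^(m*n-2) * d^2 = d^(m*n-2) * 1 := by rw [mul_one]; exact h3
      exact mul_left_cancel₀ (pow_ne_zero _ hd) h4
    -- compose with C d * X
    have hcompd : (chebT (m*n)).comp ℓ₂ = C (d^(m*n)) * chebT (m*n) := by
      have hd1 : d = 1 ∨ d = -1 := by
        have hz : (d-1)*(d+1) = 0 := by linear_combination hd2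
        rcases mul_eq_zero.mp hz with h|h
        · exact Or.inl (by linear_combination h)
        · exact Or.inr (by linear_combination h)
      rcases hd1 with hd1|hd1
      · subst hd1
        rw [hℓ₂d]
        simp
      · subst hd1
        rw [hℓ₂d, show (C (-1 : ℂ) * X + C 0 : ℂ[X]) = -X by simp, chebT_comp_neg (m*n)]
    rw [hcompd] at heq
    -- cancel composition with chebT n
    have hmain : (chebT m).comp ℓ = C (a^m) * chebT m + C f := by
      have hz : ((chebT m).comp ℓ - (C (a^m) * chebT m + C f)).comp (chebT n) = 0 := by
        rw [sub_comp, add_comp, mul_comp, C_comp, C_comp, heq, chebT_mul m n, hc0, C_mul]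
        ring
      rcases comp_eq_zero_iff.mp hz with h|⟨_, h⟩
      · exact sub_eq_zero.mp h
      · exfalso
        have := congrArg natDegree h
        rw [hTn_deg, natDegree_C] at this
        omega
    -- expand with struct at m
    obtain ⟨u, huEq, hudeg⟩ := chebT_struct' m hm3
    have hmainL : (chebT m).comp ℓ = ℓ^m - C ((m:ℕ):ℂ) * ℓ^(m-2) + u.comp ℓ := by
      rw [huEq]
      simp [add_comp, sub_comp, mul_comp, C_comp, pow_comp, X_comp]
    have lpow : ∀ K j : ℕ, j ≤ K → (ℓ^K).coeff j = a^j * b^(K-j) * (K.choose j) := by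
      intro K j hj
      rw [hℓd]
      exact linear_pow_coeff a b K j hj
    have lucomp : (u.comp ℓ).natDegree ≤ m - 3 := by
      rw [natDegree_comp, hℓ, mul_one]
      exact hudeg
    have ldeg : ∀ K : ℕ, (ℓ^K).natDegree ≤ K := by
      intro K
      rw [hℓd]
      exact linear_pow_natDegree_le a b K
    -- coefficient at m-1 : b = 0
    have hE1 := congrArg (fun p : ℂ[X] => p.coeff (m-1)) hmain
    simp only [coeff_add, coeff_C_mul] at hE1
    rw [hmainL] at hE1
    simp only [coeff_add, coeff_sub, coeff_C_mul] at hE1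
    rw [lpow _ _ (by omega),
      coeff_eq_zero_of_natDegree_lt ((ldeg _).trans_lt (show m-2 < m-1 by omega)),
      coeff_eq_zero_of_natDegree_lt (lucomp.trans_lt (show m-3 < m-1 by omega)),
      chebT_coeff_sub1 m hm3, coeff_C, if_neg (by omega),
      show m - (m-1) = 1 by omega, pow_one,
      Nat.choose_symm (show 1 ≤ m by omega), Nat.choose_one_right] at hE1
    have hb : b = 0 := by
      have h6 : a ^ (m-1) * b * ((m:ℕ):ℂ) = 0 := by
        linear_combination hE1
      rcases mul_eq_zero.mp h6 with h|h
      · rcases mul_eq_zero.mp h with h'|h'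
        · exact absurd h' (pow_ne_zero _ ha)
        · exact h'
      · exact absurd h (Nat.cast_ne_zero.mpr (by omega))
    subst hb
    -- coefficient at m-2 : a^2 = 1
    have hE2 := congrArg (fun p : ℂ[X] => p.coeff (m-2)) hmain
    simp only [coeff_add, coeff_C_mul] at hE2
    rw [hmainL] at hE2
    simp only [coeff_add, coeff_sub, coeff_C_mul] at hE2
    rw [lpow _ _ (by omega), lpow _ _ le_rfl,
      coeff_eq_zero_of_natDegree_lt (lucomp.trans_lt (show m-3 < m-2 by omega)),
      chebT_coeff_sub2 m hm3, coeff_C, if_neg (by omega),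
      show m - (m-2) = 2 by omega, zero_pow (two_ne_zero),
      Nat.sub_self, pow_zero, Nat.choose_self] at hE2
    have ha2 : a^2 = 1 := by
      have hm0 : ((m:ℕ):ℂ) ≠ 0 := Nat.cast_ne_zero.mpr (by omega)
      have h7 : a^(m-2) * ((m:ℕ):ℂ) = a^m * ((m:ℕ):ℂ) := by
        linear_combination -hE2
      have h8 := mul_right_cancel₀ hm0 h7
      have h9 : a^m = a^(m-2) * a^2 := by
        rw [← pow_add]
        congr 1
        omega
      rw [h9] at h8
      have h10 : a^(m-2) * 1 = a^(m-2) * a^2 := by rw [mul_one]; exact h8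
      exact (mul_left_cancel₀ (pow_ne_zero _ ha) h10).symm
    have ha1 : a = 1 ∨ a = -1 := by
      have hz : (a-1)*(a+1) = 0 := by linear_combination ha2
      rcases mul_eq_zero.mp hz with h|h
      · exact Or.inl (by linear_combination h)
      · exact Or.inr (by linear_combination h)
    rcases ha1 with ha1|ha1
    · left
      rw [hℓd, ha1]
      simp
    · right
      rw [hℓd, ha1]
      simp
end

section
/- Let a, b, h ∈ ℂ[X] be nonconstant and let s, n be coprime positive integers. If a ∘ b = X^s·h(X)^n, then there exist integers j, k > 0, polynomials ĥ, h̃ ∈ ℂ[X], and a linear ℓ ∈ ℂ[X] such that a = X^j·ĥ(X)^n ∘ ℓ and b = ℓ^{-1} ∘ X^k·h̃(X)^n. If instead a ∘ b = X^s·h(X^n), then there exist integers j, k > 0, polynomials ĥ, h̃ ∈ ℂ[X], and a linear ℓ ∈ ℂ[X] such that a = X^j·ĥ(X^n) ∘ ℓ and b = ℓ^{-1} ∘ X^k·h̃(X^n). -/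
open Polynomial

namespace TwistedAux



lemma comp_ne_zero {p q : ℂ[X]} (hp : p ≠ 0) (hq : q.natDegree ≠ 0) : p.comp q ≠ 0 := by
  intro h
  have h2 := leadingCoeff_comp (p := p) hq
  rw [h, leadingCoeff_zero] at h2
  have : q ≠ 0 := fun h0 => hq (by simp [h0])
  exact mul_ne_zero (leadingCoeff_ne_zero.mpr hp)
    (pow_ne_zero _ (leadingCoeff_ne_zero.mpr this)) h2.symm

lemma comp_right_cancel {p q B : ℂ[X]} (hB : B.natDegree ≠ 0) (h : p.comp B = q.comp B) :
    p = q := by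
  by_contra hne
  have h0 : (p - q).comp B = 0 := by rw [sub_comp, h, sub_self]
  exact comp_ne_zero (sub_ne_zero.mpr hne) hB h0

lemma coeff_comp_C_mul_X (p : ℂ[X]) (γ : ℂ) (i : ℕ) :
    (p.comp (C γ * X)).coeff i = γ ^ i * p.coeff i := by
  rw [comp_eq_sum_left, Polynomial.sum_def, finset_sum_coeff]
  have h1 : ∀ j ∈ p.support,
      (C (p.coeff j) * (C γ * X) ^ j).coeff i = if j = i then γ ^ i * p.coeff i else 0 := by
    intro j _
    rw [mul_pow, ← C_pow, ← mul_assoc, ← C_mul, coeff_C_mul, coeff_X_pow]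
    by_cases hji : j = i
    · subst hji; simp [mul_comm]
    · rw [if_neg (fun hh => hji hh.symm), if_neg hji, mul_zero]
  rw [Finset.sum_congr rfl h1, Finset.sum_ite_eq' p.support i (fun _ => γ ^ i * p.coeff i)]
  by_cases hi : i ∈ p.support
  · simp [hi]
  · simp [hi, Polynomial.notMem_support_iff.mp hi]

lemma grade_decomp (n : ℕ) (hn : 0 < n) (p : ℂ[X]) (hp : p ≠ 0) (h0 : p.coeff 0 = 0)
    (hg : ∀ i, p.coeff i ≠ 0 → i ≡ p.natTrailingDegree [MOD n]) :
    ∃ j, 0 < j ∧ ∃ q : ℂ[X], p = X ^ j * q.comp (X ^ n) := by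
  set j := p.natTrailingDegree with hjdef
  have htc : p.coeff j ≠ 0 := trailingCoeff_nonzero_iff_nonzero.mpr hp
  have hj0 : 0 < j := by
    rcases Nat.eq_zero_or_pos j with hz | hpos
    · exact absurd (hz ▸ htc) (by simp [h0])
    · exact hpos
  have key : ∀ i ∈ p.support, j + n * ((i - j) / n) = i := by
    intro i hi
    have hji : j ≤ i := natTrailingDegree_le_of_ne_zero (Polynomial.mem_support_iff.mp hi)
    have hdvd : n ∣ i - j := (Nat.modEq_iff_dvd' hji).mp (hg i (Polynomial.mem_support_iff.mp hi)).symm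
    rw [Nat.mul_div_cancel' hdvd]
    omega
  refine ⟨j, hj0, ∑ i ∈ p.support, C (p.coeff i) * X ^ ((i - j) / n), ?_⟩
  have hcomp : (∑ i ∈ p.support, C (p.coeff i) * X ^ ((i - j) / n)).comp (X ^ n)
      = ∑ i ∈ p.support, C (p.coeff i) * X ^ (n * ((i - j) / n)) := by
    rw [Polynomial.comp, eval₂_finset_sum]
    refine Finset.sum_congr rfl fun i _ => ?_
    rw [← Polynomial.comp, mul_comp, C_comp, X_pow_comp, ← pow_mul]
  rw [hcomp, Finset.mul_sum]
  conv_lhs => rw [p.as_sum_support_C_mul_X_pow]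
  refine Finset.sum_congr rfl fun i hi => ?_
  rw [mul_left_comm, ← pow_add, key i hi]

lemma rootMultiplicity_pow' {p : ℂ[X]} (hp : p ≠ 0) (k : ℕ) (x : ℂ) :
    rootMultiplicity x (p ^ k) = k * rootMultiplicity x p := by
  induction k with
  | zero =>
      simp only [pow_zero, zero_mul]
      exact rootMultiplicity_eq_zero (by simp [Polynomial.IsRoot])
  | succ k ih =>
      rw [pow_succ, rootMultiplicity_mul (mul_ne_zero (pow_ne_zero _ hp) hp), ih]
      ring

lemma rootMultiplicity_comp {p q : ℂ[X]} (hp : p ≠ 0) (hq : q.natDegree ≠ 0) (ξ : ℂ) :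
    rootMultiplicity ξ (p.comp q) =
      rootMultiplicity (q.eval ξ) p * rootMultiplicity ξ (q - C (q.eval ξ)) := by
  set y := q.eval ξ with hy
  obtain ⟨g, hfac, hnd⟩ := p.exists_eq_pow_rootMultiplicity_mul_and_not_dvd hp y
  have hgy : ¬ g.IsRoot y := by rwa [← dvd_iff_isRoot]
  have hg0 : g ≠ 0 := fun h => hnd (h ▸ dvd_zero _)
  have hqy : q - C y ≠ 0 := by
    intro h
    have : (q - C y).natDegree = q.natDegree := natDegree_sub_C
    rw [h, natDegree_zero] at this
    exact hq this.symm
  have hcomp : p.comp q = (q - C y) ^ (rootMultiplicity y p) * g.comp q := by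
    conv_lhs => rw [hfac]
    rw [mul_comp, pow_comp, sub_comp, X_comp, C_comp]
  have hz : rootMultiplicity ξ (g.comp q) = 0 := by
    refine rootMultiplicity_eq_zero ?_
    simp only [Polynomial.IsRoot, eval_comp, ← hy]
    exact hgy
  rw [hcomp, rootMultiplicity_mul
      (mul_ne_zero (pow_ne_zero _ hqy) (comp_ne_zero hg0 hq)),
    rootMultiplicity_pow' hqy, hz, add_zero, mul_comm]

lemma rootMultiplicity_rhs1 {h : ℂ[X]} (hh : h ≠ 0) (s n : ℕ) (ξ : ℂ) :
    rootMultiplicity ξ ((X : ℂ[X]) ^ s * h ^ n) =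
      (if ξ = 0 then s else 0) + n * rootMultiplicity ξ h := by
  have hX : (X : ℂ[X]) ≠ 0 := X_ne_zero
  rw [rootMultiplicity_mul (mul_ne_zero (pow_ne_zero _ hX) (pow_ne_zero _ hh)),
    rootMultiplicity_pow' hh, rootMultiplicity_pow' hX]
  congr 1
  by_cases hξ : ξ = 0
  · subst hξ
    have h1 : rootMultiplicity (0:ℂ) (X : ℂ[X]) = 1 := by
      simpa using rootMultiplicity_X_sub_C_self (x := (0:ℂ))
    simp [h1]
  · have h1 : rootMultiplicity ξ (X : ℂ[X]) = 0 :=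
      rootMultiplicity_eq_zero (by simp [Polynomial.IsRoot, hξ])
    simp [h1, hξ]

lemma modEq_of_pow_eq {ζ : ℂ} {n : ℕ} (hn : 0 < n) (hζ : IsPrimitiveRoot ζ n)
    {i j : ℕ} (hij : ζ ^ i = ζ ^ j) : i ≡ j [MOD n] := by
  have hζ0 : ζ ≠ 0 := hζ.ne_zero hn.ne'
  rcases Nat.le_total j i with hle | hle
  · have h2 : ζ ^ (i - j) = 1 := by
      have h1 : ζ ^ j * ζ ^ (i - j) = ζ ^ j * 1 := by
        rw [← pow_add, mul_one, show j + (i - j) = i by omega, hij]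
      exact mul_left_cancel₀ (pow_ne_zero _ hζ0) h1
    have h3 : n ∣ i - j := hζ.dvd_of_pow_eq_one _ h2
    exact ((Nat.modEq_iff_dvd' hle).mpr h3).symm
  · have h2 : ζ ^ (j - i) = 1 := by
      have h1 : ζ ^ i * ζ ^ (j - i) = ζ ^ i * 1 := by
        rw [← pow_add, mul_one, show i + (j - i) = j by omega, hij.symm]
      exact mul_left_cancel₀ (pow_ne_zero _ hζ0) h1
    have h3 : n ∣ j - i := hζ.dvd_of_pow_eq_one _ h2
    exact (Nat.modEq_iff_dvd' hle).mpr h3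

lemma twisted_comp (p : ℂ[X]) (s n : ℕ) (ζ : ℂ) (hζ : ζ ^ n = 1) :
    ((X : ℂ[X]) ^ s * p.comp (X ^ n)).comp (C ζ * X) =
      C (ζ ^ s) * ((X : ℂ[X]) ^ s * p.comp (X ^ n)) := by
  have h1 : ((X : ℂ[X]) ^ n).comp (C ζ * X) = X ^ n := by
    rw [X_pow_comp, mul_pow, ← C_pow, hζ, C_1, one_mul]
  rw [mul_comp, X_pow_comp, comp_assoc, h1, mul_pow, ← C_pow]
  ring




lemma coprime_of_eq {m μ s n e : ℕ} (h : m * μ = s + n * e) (hcop : Nat.Coprime s n) :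
    Nat.Coprime m n := by
  have h1 : Nat.gcd m n ∣ s := by
    have h2 : Nat.gcd m n ∣ m * μ := Dvd.dvd.mul_right (Nat.gcd_dvd_left _ _) _
    have h3 : Nat.gcd m n ∣ n * e := Dvd.dvd.mul_right (Nat.gcd_dvd_right _ _) _
    have h4 : s = m * μ - n * e := by omega
    rw [h4]; exact Nat.dvd_sub h2 h3
  have h5 : Nat.gcd m n ∣ Nat.gcd s n := Nat.dvd_gcd h1 (Nat.gcd_dvd_right _ _)
  have h6 : Nat.gcd s n = 1 := hcop
  exact Nat.dvd_one.mp (h6 ▸ h5)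

lemma div_gcd_dvd_of_eq {m μ n e : ℕ} (hn : 0 < n) (h : m * μ = n * e) :
    (n / Nat.gcd n m) ∣ μ := by
  set g := Nat.gcd n m with hg
  have hgpos : 0 < g := Nat.gcd_pos_of_pos_left _ hn
  have hgn : g ∣ n := Nat.gcd_dvd_left _ _
  have hgm : g ∣ m := Nat.gcd_dvd_right _ _
  have hqg : n / g * g = n := Nat.div_mul_cancel hgn
  have hdiv : (m / g) * μ = (n / g) * e := by
    apply Nat.eq_of_mul_eq_mul_right hgpos
    have l1 : m / g * μ * g = m * μ := by rw [mul_right_comm, Nat.div_mul_cancel hgm]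
    have l2 : n / g * e * g = n * e := by rw [mul_right_comm, hqg]
    rw [l1, l2, h]
  have hcop2 : Nat.Coprime (n / g) (m / g) := Nat.coprime_div_gcd_div_gcd hgpos
  exact (Nat.Coprime.dvd_mul_left hcop2).mp ⟨e, hdiv⟩

lemma two_le_div_gcd {m n : ℕ} (hn : 0 < n) (hnd : ¬ n ∣ m) : 2 ≤ n / Nat.gcd n m := by
  set g := Nat.gcd n m with hg
  have hgn : g ∣ n := Nat.gcd_dvd_left _ _
  have hgm : g ∣ m := Nat.gcd_dvd_right _ _
  have hqg : n / g * g = n := Nat.div_mul_cancel hgn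
  rcases Nat.lt_or_ge (n / g) 2 with h2 | h2
  · exfalso
    generalize hqdef : n / g = q at h2 hqg
    have h3 : q = 0 ∨ q = 1 := by omega
    rcases h3 with h3 | h3
    · rw [h3, zero_mul] at hqg; omega
    · rw [h3, one_mul] at hqg
      exact hnd (hqg ▸ hgm)
  · exact h2

lemma natDegree_pow'' (p : ℂ[X]) (t : ℕ) : (p ^ t).natDegree = t * p.natDegree := by
  by_cases hp : p = 0
  · subst hp
    rcases Nat.eq_zero_or_pos t with h | h
    · simp [h]
    · rw [zero_pow (by omega)]; simp
  · exact natDegree_pow' (pow_ne_zero _ (leadingCoeff_ne_zero.mpr hp))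




lemma pow_decomp (n : ℕ) (hn : 0 < n) (p : ℂ[X]) (hp : p ≠ 0) (h0 : p.IsRoot 0)
    (hg : ∀ ξ : ℂ, ξ ≠ 0 → n ∣ rootMultiplicity ξ p) :
    ∃ j, 0 < j ∧ ∃ q : ℂ[X], p = X ^ j * q ^ n := by
  classical
  have hsp : p.Splits := IsAlgClosed.splits p
  have hfac := hsp.eq_prod_roots
  rw [Finset.prod_multiset_map_count] at hfac
  have h0mem : (0:ℂ) ∈ p.roots.toFinset := by
    rw [Multiset.mem_toFinset, mem_roots hp]; exact h0
  set j := p.roots.count 0 with hjdef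
  have hj : 0 < j := by
    rw [hjdef, count_roots]
    exact (rootMultiplicity_pos hp).mpr h0
  obtain ⟨β, hβ⟩ := IsAlgClosed.exists_pow_nat_eq p.leadingCoeff hn
  refine ⟨j, hj, C β * ∏ ξ ∈ p.roots.toFinset.erase 0, (X - C ξ) ^ (p.roots.count ξ / n), ?_⟩
  have hqpow0 : (C β * ∏ ξ ∈ p.roots.toFinset.erase 0, (X - C ξ) ^ (p.roots.count ξ / n)) ^ n
      = C p.leadingCoeff * ∏ ξ ∈ p.roots.toFinset.erase 0, (X - C ξ) ^ (p.roots.count ξ) := by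
    rw [mul_pow, ← C_pow, hβ, ← Finset.prod_pow]
    congr 1
    refine Finset.prod_congr rfl fun ξ hξ => ?_
    have hξ0 : ξ ≠ 0 := Finset.ne_of_mem_erase hξ
    have hdvd : n ∣ p.roots.count ξ := by
      rw [count_roots]; exact hg ξ hξ0
    rw [← pow_mul, Nat.div_mul_cancel hdvd]
  have hsplit : ∏ ξ ∈ p.roots.toFinset, (X - C ξ) ^ (p.roots.count ξ)
      = (X - C 0) ^ j * ∏ ξ ∈ p.roots.toFinset.erase 0, (X - C ξ) ^ (p.roots.count ξ) :=
    (Finset.mul_prod_erase _ _ h0mem).symm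
  have hfinal : C p.leadingCoeff * ((X - C 0) ^ j
        * ∏ ξ ∈ p.roots.toFinset.erase 0, (X - C ξ) ^ (p.roots.count ξ))
      = X ^ j * (C β * ∏ ξ ∈ p.roots.toFinset.erase 0, (X - C ξ) ^ (p.roots.count ξ / n)) ^ n := by
    rw [hqpow0, C_0, sub_zero]
    ring
  conv_lhs => rw [hfac, hsplit]
  exact hfinal

lemma key_count (b : ℂ[X]) (hb : 0 < b.natDegree) (ρ₀ ρ₁ : ℂ) (hρ : ρ₀ ≠ ρ₁)
    (hroot0 : b.eval 0 = ρ₀)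
    (n₀ : ℕ) (hn₀ : 2 ≤ n₀)
    (h₀ : ∀ ξ : ℂ, ξ ≠ 0 → n₀ ∣ rootMultiplicity ξ (b - C ρ₀))
    (q : ℕ) (hq : 2 ≤ q)
    (h₁ : ∀ ξ : ℂ, q ∣ rootMultiplicity ξ (b - C ρ₁)) :
    False := by
  classical
  set d := b.natDegree with hd
  have hp₀deg : (b - C ρ₀).natDegree = d := natDegree_sub_C
  have hp₁deg : (b - C ρ₁).natDegree = d := natDegree_sub_C
  have hp₀ : b - C ρ₀ ≠ 0 := fun h => by rw [h, natDegree_zero] at hp₀deg; omega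
  have hp₁ : b - C ρ₁ ≠ 0 := fun h => by rw [h, natDegree_zero] at hp₁deg; omega
  set T₀ := (b - C ρ₀).roots.toFinset with hT₀
  set T₁ := (b - C ρ₁).roots.toFinset with hT₁
  -- total root counts
  have hs₀ : (b - C ρ₀).Splits := IsAlgClosed.splits _
  have hs₁ : (b - C ρ₁).Splits := IsAlgClosed.splits _
  have hcard₀ : ∑ ξ ∈ T₀, (b - C ρ₀).roots.count ξ = d := by
    rw [Multiset.toFinset_sum_count_eq, ← hp₀deg, hs₀.natDegree_eq_card_roots]
  have hcard₁ : ∑ ξ ∈ T₁, (b - C ρ₁).roots.count ξ = d := by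
    rw [Multiset.toFinset_sum_count_eq, ← hp₁deg, hs₁.natDegree_eq_card_roots]
  have h0mem : (0:ℂ) ∈ T₀ := by
    rw [hT₀, Multiset.mem_toFinset, mem_roots hp₀]
    simp [Polynomial.IsRoot, hroot0]
  -- membership facts
  have hmem₀ : ∀ ξ ∈ T₀, 1 ≤ (b - C ρ₀).roots.count ξ := by
    intro ξ hξ
    rw [hT₀, Multiset.mem_toFinset] at hξ
    exact Multiset.one_le_count_iff_mem.mpr hξ
  have hmem₁ : ∀ ξ ∈ T₁, 1 ≤ (b - C ρ₁).roots.count ξ := by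
    intro ξ hξ
    rw [hT₁, Multiset.mem_toFinset] at hξ
    exact Multiset.one_le_count_iff_mem.mpr hξ
  have heval₀ : ∀ ξ ∈ T₀, b.eval ξ = ρ₀ := by
    intro ξ hξ
    rw [hT₀, Multiset.mem_toFinset, mem_roots hp₀] at hξ
    have h2 : eval ξ b - ρ₀ = 0 := by simpa using hξ
    exact sub_eq_zero.mp h2
  have heval₁ : ∀ ξ ∈ T₁, b.eval ξ = ρ₁ := by
    intro ξ hξ
    rw [hT₁, Multiset.mem_toFinset, mem_roots hp₁] at hξ
    have h2 : eval ξ b - ρ₁ = 0 := by simpa using hξ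
    exact sub_eq_zero.mp h2
  -- lower bounds on multiplicities
  have hge₀ : ∀ ξ ∈ T₀.erase 0, 2 ≤ (b - C ρ₀).roots.count ξ := by
    intro ξ hξ
    have hξ0 : ξ ≠ 0 := Finset.ne_of_mem_erase hξ
    have h1 := hmem₀ ξ (Finset.mem_of_mem_erase hξ)
    have hdvd := h₀ ξ hξ0
    rw [← count_roots] at hdvd
    have := Nat.le_of_dvd (by omega) hdvd
    omega
  have hge₁ : ∀ ξ ∈ T₁, 2 ≤ (b - C ρ₁).roots.count ξ := by
    intro ξ hξ
    have h1 := hmem₁ ξ hξ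
    have hdvd := h₁ ξ
    rw [← count_roots] at hdvd
    have := Nat.le_of_dvd (by omega) hdvd
    omega
  -- r bounds
  set r₀ := T₀.card with hr₀
  set r₁ := T₁.card with hr₁
  have hbound₀ : 1 + 2 * (r₀ - 1) ≤ d := by
    have hsplit : (b - C ρ₀).roots.count 0 + ∑ ξ ∈ T₀.erase 0, (b - C ρ₀).roots.count ξ = d :=
      (Finset.add_sum_erase T₀ (fun ξ => (b - C ρ₀).roots.count ξ) h0mem).trans hcard₀
    have hcarde : (T₀.erase 0).card = r₀ - 1 := Finset.card_erase_of_mem h0mem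
    have hsum := Finset.card_nsmul_le_sum (T₀.erase 0)
      (fun ξ => (b - C ρ₀).roots.count ξ) 2 hge₀
    rw [smul_eq_mul] at hsum
    have h1 := hmem₀ 0 h0mem
    omega
  have hbound₁ : 2 * r₁ ≤ d := by
    have hsum := Finset.card_nsmul_le_sum T₁ (fun ξ => (b - C ρ₁).roots.count ξ) 2 hge₁
    rw [smul_eq_mul] at hsum
    omega
  have hr₀pos : 1 ≤ r₀ := Finset.card_pos.mpr ⟨0, h0mem⟩
  -- disjointness
  have hdisj : Disjoint T₀ T₁ := by
    rw [Finset.disjoint_left]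
    intro ξ hξ₀ hξ₁
    exact hρ ((heval₀ ξ hξ₀).symm.trans (heval₁ ξ hξ₁))
  -- derivative
  set b' := derivative b with hb'
  have hb'ne : b' ≠ 0 := by
    intro hzero
    have hc := coeff_derivative b (d - 1)
    rw [← hb', hzero, coeff_zero] at hc
    have hd1 : d - 1 + 1 = d := by omega
    rw [hd1] at hc
    have hlead : b.coeff d ≠ 0 := by
      have hbne : b ≠ 0 := fun h => by simp [h, hd] at hb
      exact leadingCoeff_ne_zero.mpr hbne
    have hcast : ((d - 1 : ℕ) : ℂ) + 1 ≠ 0 := by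
      have h3 : (((d - 1) + 1 : ℕ) : ℂ) ≠ 0 := Nat.cast_ne_zero.mpr (Nat.succ_ne_zero _)
      push_cast at h3
      exact h3
    exact mul_ne_zero hlead hcast hc.symm
  have hder₀ : ∀ ξ ∈ T₀, (b - C ρ₀).roots.count ξ - 1 ≤ b'.roots.count ξ := by
    intro ξ _
    rw [count_roots, count_roots]
    have := rootMultiplicity_sub_one_le_derivative_rootMultiplicity (b - C ρ₀) ξ
    rwa [derivative_sub, derivative_C, sub_zero, ← hb'] at this
  have hder₁ : ∀ ξ ∈ T₁, (b - C ρ₁).roots.count ξ - 1 ≤ b'.roots.count ξ := by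
    intro ξ _
    rw [count_roots, count_roots]
    have := rootMultiplicity_sub_one_le_derivative_rootMultiplicity (b - C ρ₁) ξ
    rwa [derivative_sub, derivative_C, sub_zero, ← hb'] at this
  -- sum over union bounded by deg b'
  have hsum_union : ∑ ξ ∈ T₀ ∪ T₁, b'.roots.count ξ ≤ d - 1 := by
    have h1 : ∑ ξ ∈ (T₀ ∪ T₁) ∩ b'.roots.toFinset, b'.roots.count ξ
        = ∑ ξ ∈ T₀ ∪ T₁, b'.roots.count ξ := by
      refine Finset.sum_subset Finset.inter_subset_left ?_
      intro ξ _ hnot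
      rw [Multiset.count_eq_zero]
      intro hmem
      exact hnot (Finset.mem_inter.mpr ⟨‹ξ ∈ T₀ ∪ T₁›, Multiset.mem_toFinset.mpr hmem⟩)
    have h2 : ∑ ξ ∈ (T₀ ∪ T₁) ∩ b'.roots.toFinset, b'.roots.count ξ
        ≤ ∑ ξ ∈ b'.roots.toFinset, b'.roots.count ξ :=
      Finset.sum_le_sum_of_subset Finset.inter_subset_right
    rw [Multiset.toFinset_sum_count_eq] at h2
    have h3 : Multiset.card b'.roots ≤ b'.natDegree := card_roots' b'
    have h4 : b'.natDegree ≤ d - 1 := natDegree_derivative_le b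
    omega
  -- assemble
  have hsum₀ : ∑ ξ ∈ T₀, ((b - C ρ₀).roots.count ξ - 1) + r₀ = d := by
    have : ∑ ξ ∈ T₀, ((b - C ρ₀).roots.count ξ - 1 + 1) = d := by
      rw [Finset.sum_congr rfl fun ξ hξ => Nat.sub_add_cancel (hmem₀ ξ hξ)]
      exact hcard₀
    rw [Finset.sum_add_distrib, Finset.sum_const, smul_eq_mul, mul_one] at this
    exact this
  have hsum₁ : ∑ ξ ∈ T₁, ((b - C ρ₁).roots.count ξ - 1) + r₁ = d := by
    have : ∑ ξ ∈ T₁, ((b - C ρ₁).roots.count ξ - 1 + 1) = d := by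
      rw [Finset.sum_congr rfl fun ξ hξ => Nat.sub_add_cancel (hmem₁ ξ hξ)]
      exact hcard₁
    rw [Finset.sum_add_distrib, Finset.sum_const, smul_eq_mul, mul_one] at this
    exact this
  have hfinal : ∑ ξ ∈ T₀, ((b - C ρ₀).roots.count ξ - 1)
      + ∑ ξ ∈ T₁, ((b - C ρ₁).roots.count ξ - 1) ≤ d - 1 := by
    calc ∑ ξ ∈ T₀, ((b - C ρ₀).roots.count ξ - 1)
        + ∑ ξ ∈ T₁, ((b - C ρ₁).roots.count ξ - 1)
        ≤ ∑ ξ ∈ T₀, b'.roots.count ξ + ∑ ξ ∈ T₁, b'.roots.count ξ :=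
          Nat.add_le_add (Finset.sum_le_sum hder₀) (Finset.sum_le_sum hder₁)
      _ = ∑ ξ ∈ T₀ ∪ T₁, b'.roots.count ξ := (Finset.sum_union hdisj).symm
      _ ≤ d - 1 := hsum_union
  omega


end TwistedAux

open TwistedAux

theorem decompositions_of_twisted_powers
    (a b h : ℂ[X])
    (ha : 0 < a.natDegree) (hb : 0 < b.natDegree) (hh : 0 < h.natDegree)
    (s n : ℕ) (hs : 0 < s) (hn : 0 < n) (hcop : Nat.Coprime s n) :
    (a.comp b = Polynomial.X ^ s * h ^ n →
      ∃ (j k : ℕ) (hhat htil ℓ ℓinv : ℂ[X]),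
        0 < j ∧ 0 < k ∧ ℓ.natDegree = 1 ∧
        ℓ.comp ℓinv = Polynomial.X ∧ ℓinv.comp ℓ = Polynomial.X ∧
        a = (Polynomial.X ^ j * hhat ^ n).comp ℓ ∧
        b = ℓinv.comp (Polynomial.X ^ k * htil ^ n)) ∧
    (a.comp b = Polynomial.X ^ s * h.comp (Polynomial.X ^ n) →
      ∃ (j k : ℕ) (hhat htil ℓ ℓinv : ℂ[X]),
        0 < j ∧ 0 < k ∧ ℓ.natDegree = 1 ∧
        ℓ.comp ℓinv = Polynomial.X ∧ ℓinv.comp ℓ = Polynomial.X ∧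
        a = (Polynomial.X ^ j * hhat.comp (Polynomial.X ^ n)).comp ℓ ∧
        b = ℓinv.comp (Polynomial.X ^ k * htil.comp (Polynomial.X ^ n))) := by
  have hane : a ≠ 0 := fun h0 => by simp [h0] at ha
  have hbne : b ≠ 0 := fun h0 => by simp [h0] at hb
  have hhne : h ≠ 0 := fun h0 => by simp [h0] at hh
  have hbd : b.natDegree ≠ 0 := hb.ne'
  constructor
  · -- Part 1 : a ∘ b = X^s h^n
    intro H1
    set c := b.eval 0 with hc
    have heval0 : a.eval c = 0 := by
      have h1 := congrArg (Polynomial.eval (0 : ℂ)) H1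
      rw [eval_comp, ← hc] at h1
      simpa [zero_pow hs.ne'] using h1
    have ha_c : a.IsRoot c := heval0
    have hmul : ∀ ξ : ℂ, rootMultiplicity (b.eval ξ) a * rootMultiplicity ξ (b - C (b.eval ξ))
        = (if ξ = 0 then s else 0) + n * rootMultiplicity ξ h := by
      intro ξ
      rw [← rootMultiplicity_comp hane hbd ξ, H1]
      exact rootMultiplicity_rhs1 hhne s n ξ
    have hm₀pos : 0 < rootMultiplicity c a := (rootMultiplicity_pos hane).mpr ha_c
    have hbCcne : b - C c ≠ 0 := by
      intro h0
      have h1 : (b - C c).natDegree = b.natDegree := natDegree_sub_C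
      rw [h0, natDegree_zero] at h1
      exact hbd h1.symm
    have key0 : rootMultiplicity c a * rootMultiplicity 0 (b - C c)
        = s + n * rootMultiplicity 0 h := by
      have h1 := hmul 0
      rw [← hc, if_pos rfl] at h1
      exact h1
    have cop : Nat.Coprime (rootMultiplicity c a) n := coprime_of_eq key0 hcop
    have C7 : ∀ ξ : ℂ, ξ ≠ 0 → n ∣ rootMultiplicity ξ (b - C c) := by
      intro ξ hξ
      by_cases hr : (b - C c).IsRoot ξ
      · have hbξ : b.eval ξ = c := by
          have h2 : b.eval ξ - c = 0 := by simpa using hr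
          exact sub_eq_zero.mp h2
        have h1 := hmul ξ
        rw [hbξ, if_neg hξ, zero_add] at h1
        have hdvd : n ∣ rootMultiplicity c a * rootMultiplicity ξ (b - C c) :=
          ⟨rootMultiplicity ξ h, h1⟩
        exact (Nat.Coprime.dvd_mul_left cop.symm).mp hdvd
      · rw [rootMultiplicity_eq_zero hr]; exact dvd_zero n
    have C6 : ∀ ρ : ℂ, ρ ≠ c → n ∣ rootMultiplicity ρ a := by
      intro ρ hρc
      by_cases hr : a.IsRoot ρ
      swap
      · rw [rootMultiplicity_eq_zero hr]; exact dvd_zero n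
      by_contra hnd
      have hn2 : 2 ≤ n := by
        rcases Nat.lt_or_ge n 2 with h2 | h2
        · exfalso
          have h3 : n = 1 := by omega
          exact hnd (h3 ▸ one_dvd _)
        · exact h2
      refine key_count b hb c ρ (Ne.symm hρc) hc.symm n hn2 C7
        (n / Nat.gcd n (rootMultiplicity ρ a)) (two_le_div_gcd hn hnd) ?_
      intro ξ
      by_cases hrξ : (b - C ρ).IsRoot ξ
      · have hbξ : b.eval ξ = ρ := by
          have h2 : b.eval ξ - ρ = 0 := by simpa using hrξ
          exact sub_eq_zero.mp h2
        have hξ0 : ξ ≠ 0 := by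
          intro h0
          subst h0
          exact hρc (hbξ ▸ hc).symm
        have h1 := hmul ξ
        rw [hbξ, if_neg hξ0, zero_add] at h1
        exact div_gcd_dvd_of_eq hn h1
      · rw [rootMultiplicity_eq_zero hrξ]; exact dvd_zero _
    -- construction for a
    set A := a.comp (X + C c) with hA
    have hcompinv : (X + C c : ℂ[X]).comp (X - C c) = (X : ℂ[X]) := by
      simp
    have hAa : A.comp (X - C c) = a := by
      rw [hA, comp_assoc, hcompinv, comp_X]
    have hAne : A ≠ 0 := fun h0 => hane (by rw [← hAa, h0, zero_comp])
    have hXcd : (X + C c : ℂ[X]).natDegree ≠ 0 := by rw [natDegree_X_add_C]; omega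
    have hAmult : ∀ ξ : ℂ, rootMultiplicity ξ A = rootMultiplicity (ξ + c) a := by
      intro ξ
      rw [hA, rootMultiplicity_comp hane hXcd ξ]
      have he : (X + C c : ℂ[X]).eval ξ = ξ + c := by simp
      rw [he]
      have h9 : (X + C c : ℂ[X]) - C (ξ + c) = X - C ξ := by rw [C_add]; ring
      rw [h9, rootMultiplicity_X_sub_C_self, mul_one]
    have hAroot : A.IsRoot 0 := by
      show A.eval 0 = 0
      rw [hA, eval_comp]
      simpa using heval0
    obtain ⟨j, hj, hhat, hAdec⟩ := pow_decomp n hn A hAne hAroot (fun ξ hξ => by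
      rw [hAmult ξ]
      exact C6 (ξ + c) (fun h9 => hξ (by linear_combination h9)))
    have hBroot : (b - C c).IsRoot 0 := by
      show (b - C c).eval 0 = 0
      rw [eval_sub, eval_C, ← hc, sub_self]
    obtain ⟨k, hk, htil, hBdec⟩ := pow_decomp n hn (b - C c) hbCcne hBroot C7
    refine ⟨j, k, hhat, htil, X - C c, X + C c, hj, hk, natDegree_X_sub_C c, ?_, ?_, ?_, ?_⟩
    · simp
    · simp
    · rw [← hAdec]; exact hAa.symm
    · rw [← hBdec, add_comp, X_comp, C_comp]
      ring
  · -- Part 2 : a ∘ b = X^s h(X^n)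
    intro H2
    have hXpownd : ((X : ℂ[X]) ^ n).natDegree = n := natDegree_X_pow n
    have hcompne : h.comp ((X : ℂ[X]) ^ n) ≠ 0 :=
      comp_ne_zero hhne (by rw [hXpownd]; omega)
    -- primitive root
    have hζprim : IsPrimitiveRoot (Complex.exp (2 * Real.pi * Complex.I / n)) n :=
      Complex.isPrimitiveRoot_exp n hn.ne'
    set ζ := Complex.exp (2 * Real.pi * Complex.I / n) with hζdef
    have hζn : ζ ^ n = 1 := hζprim.pow_eq_one
    have hζ0 : ζ ≠ 0 := hζprim.ne_zero hn.ne'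
    have hord : orderOf ζ = n := hζprim.eq_orderOf.symm
    set m := a.natDegree with hm
    set d := b.natDegree with hd
    -- degree identity
    have hdeg : m * d = s + n * h.natDegree := by
      have h1 := congrArg natDegree H2
      rw [natDegree_comp,
        natDegree_mul (pow_ne_zero s X_ne_zero) hcompne, natDegree_X_pow,
        natDegree_comp, hXpownd] at h1
      rw [h1]; ring
    have hζmd : ζ ^ (m * d) = ζ ^ s := by
      rw [hdeg, pow_add, pow_mul, hζn, one_pow, mul_one]
    -- the two compositions
    set g₁ := b.comp (C ζ * X) with hg₁
    set g₂ := C (ζ ^ d) * b with hg₂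
    have hCζX : (C ζ * X : ℂ[X]).natDegree = 1 := natDegree_C_mul_X ζ hζ0
    have hg₁d : g₁.natDegree = d := by rw [hg₁, natDegree_comp, hCζX, mul_one]
    have hg₂d : g₂.natDegree = d := by rw [hg₂, natDegree_C_mul (pow_ne_zero d hζ0)]
    have hβ : b.leadingCoeff ≠ 0 := leadingCoeff_ne_zero.mpr hbne
    have hg₁lead : g₁.leadingCoeff = ζ ^ d * b.leadingCoeff := by
      rw [hg₁, leadingCoeff_comp (by rw [hCζX]; omega)]
      have h2 : (C ζ * X : ℂ[X]).leadingCoeff = ζ := by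
        rw [leadingCoeff_mul, leadingCoeff_C, leadingCoeff_X, mul_one]
      rw [h2]; ring
    have hg₂lead : g₂.leadingCoeff = ζ ^ d * b.leadingCoeff := by
      rw [hg₂, leadingCoeff_mul, leadingCoeff_C]
    set L := ζ ^ d * b.leadingCoeff with hL
    have hLne : L ≠ 0 := mul_ne_zero (pow_ne_zero _ hζ0) hβ
    have hPeq : (a.comp b).comp (C ζ * X) = C (ζ ^ s) * (a.comp b) := by
      rw [H2, twisted_comp h s n ζ hζn]
    have he₁ : a.comp g₁ = C (ζ ^ s) * (a.comp b) := by
      rw [hg₁, ← comp_assoc, hPeq]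
    have he₂ : a.comp g₂ = (a.comp (C (ζ ^ d) * X)).comp b := by
      rw [comp_assoc, mul_comp, C_comp, X_comp]
    set E := C (ζ ^ s) * a - a.comp (C (ζ ^ d) * X) with hE
    have hdiff : a.comp g₁ - a.comp g₂ = E.comp b := by
      rw [he₁, he₂, hE, sub_comp, mul_comp, C_comp]
    have hEdeg : E.natDegree ≤ m - 1 := by
      apply natDegree_le_iff_coeff_eq_zero.mpr
      intro N hN
      have hNm : m ≤ N := by omega
      rw [hE, coeff_sub, coeff_C_mul, coeff_comp_C_mul_X]
      rcases Nat.eq_or_lt_of_le hNm with hNm' | hNm'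
      · rw [← hNm']
        have h9 : (ζ ^ d) ^ m = ζ ^ s := by rw [← pow_mul, mul_comm d m, hζmd]
        rw [h9]; ring
      · have h9 : a.coeff N = 0 := coeff_eq_zero_of_natDegree_lt hNm'
        rw [h9]; ring
    have hEcompdeg : (E.comp b).natDegree ≤ (m - 1) * d := by
      calc (E.comp b).natDegree ≤ E.natDegree * b.natDegree := natDegree_comp_le
        _ ≤ (m - 1) * d := Nat.mul_le_mul_right _ hEdeg
    set δ := g₁ - g₂ with hδ
    have hδdeg : δ.natDegree = 0 := by
      by_contra hpos0
      have hpos : 0 < δ.natDegree := Nat.pos_of_ne_zero hpos0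
      have hδne : δ ≠ 0 := fun h0 => by simp [h0] at hpos
      set W := ∑ i ∈ Finset.range (m + 1),
        C (a.coeff i) * (∑ t ∈ Finset.range i, g₁ ^ t * g₂ ^ (i - 1 - t)) with hW
      have hacomp : ∀ gg : ℂ[X],
          a.comp gg = ∑ i ∈ Finset.range (m + 1), C (a.coeff i) * gg ^ i := by
        intro gg
        rw [comp_eq_sum_left]
        exact Polynomial.sum_over_range' a (by simp) (m + 1) (Nat.lt_succ_self _)
      have hWident : a.comp g₁ - a.comp g₂ = δ * W := by
        rw [hacomp g₁, hacomp g₂, ← Finset.sum_sub_distrib, hW, Finset.mul_sum]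
        refine Finset.sum_congr rfl fun i _ => ?_
        have hgeom := geom_sum₂_mul g₁ g₂ i
        calc C (a.coeff i) * g₁ ^ i - C (a.coeff i) * g₂ ^ i
            = C (a.coeff i) * (g₁ ^ i - g₂ ^ i) := by ring
          _ = C (a.coeff i) *
              ((∑ t ∈ Finset.range i, g₁ ^ t * g₂ ^ (i - 1 - t)) * (g₁ - g₂)) := by
                rw [hgeom]
          _ = δ * (C (a.coeff i) * ∑ t ∈ Finset.range i, g₁ ^ t * g₂ ^ (i - 1 - t)) := by
                rw [hδ]; ring
      have hWcoeff : W.coeff ((m - 1) * d) = a.coeff m * ((m : ℂ) * L ^ (m - 1)) := by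
        rw [hW, finset_sum_coeff, Finset.sum_range_succ]
        have hzero : ∀ i ∈ Finset.range m,
            (C (a.coeff i) * ∑ t ∈ Finset.range i, g₁ ^ t * g₂ ^ (i - 1 - t)).coeff
              ((m - 1) * d) = 0 := by
          intro i hi
          rw [Finset.mem_range] at hi
          rw [coeff_C_mul, finset_sum_coeff]
          have hz : ∀ t ∈ Finset.range i,
              (g₁ ^ t * g₂ ^ (i - 1 - t)).coeff ((m - 1) * d) = 0 := by
            intro t ht
            rw [Finset.mem_range] at ht
            apply coeff_eq_zero_of_natDegree_lt
            have n1 : (g₁ ^ t).natDegree = t * d := by rw [natDegree_pow'', hg₁d]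
            have n2 : (g₂ ^ (i - 1 - t)).natDegree = (i - 1 - t) * d := by
              rw [natDegree_pow'', hg₂d]
            have n3 := natDegree_mul_le (p := g₁ ^ t) (q := g₂ ^ (i - 1 - t))
            rw [n1, n2] at n3
            have n4 : t * d + (i - 1 - t) * d < (m - 1) * d := by
              rw [← Nat.add_mul]
              have n5 : t + (i - 1 - t) < m - 1 := by omega
              exact Nat.mul_lt_mul_of_lt_of_le n5 (le_refl d) hb
            omega
          rw [Finset.sum_congr rfl hz, Finset.sum_const_zero, mul_zero]
        rw [Finset.sum_congr rfl hzero, Finset.sum_const_zero, zero_add]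
        rw [coeff_C_mul, finset_sum_coeff]
        have hterm : ∀ t ∈ Finset.range m,
            (g₁ ^ t * g₂ ^ (m - 1 - t)).coeff ((m - 1) * d) = L ^ (m - 1) := by
          intro t ht
          rw [Finset.mem_range] at ht
          have n1 : (g₁ ^ t).natDegree = t * d := by rw [natDegree_pow'', hg₁d]
          have n2 : (g₂ ^ (m - 1 - t)).natDegree = (m - 1 - t) * d := by
            rw [natDegree_pow'', hg₂d]
          have hsum : (m - 1) * d = (g₁ ^ t).natDegree + (g₂ ^ (m - 1 - t)).natDegree := by
            rw [n1, n2, ← Nat.add_mul]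
            congr 1
            omega
          rw [hsum, coeff_mul_degree_add_degree, leadingCoeff_pow, leadingCoeff_pow,
            hg₁lead, hg₂lead, ← pow_add]
          have harith : t + (m - 1 - t) = m - 1 := by omega
          rw [harith]
        rw [Finset.sum_congr rfl hterm, Finset.sum_const, Finset.card_range, nsmul_eq_mul]
      have ham : a.coeff m ≠ 0 := leadingCoeff_ne_zero.mpr hane
      have hWne : W.coeff ((m - 1) * d) ≠ 0 := by
        rw [hWcoeff]
        exact mul_ne_zero ham
          (mul_ne_zero (Nat.cast_ne_zero.mpr (by omega)) (pow_ne_zero _ hLne))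
      have hWd : (m - 1) * d ≤ W.natDegree := le_natDegree_of_ne_zero hWne
      have hW0 : W ≠ 0 := fun h0 => hWne (by rw [h0, coeff_zero])
      have hcontra : δ.natDegree + W.natDegree ≤ (m - 1) * d := by
        rw [← natDegree_mul hδne hW0, ← hWident, hdiff]
        exact hEcompdeg
      omega
    have hbcoeff : ∀ i, 1 ≤ i → b.coeff i ≠ 0 → ζ ^ i = ζ ^ d := by
      intro i hi hbi
      have hcz : δ.coeff i = 0 := coeff_eq_zero_of_natDegree_lt (by omega)
      rw [hδ, coeff_sub, hg₁, coeff_comp_C_mul_X, hg₂, coeff_C_mul] at hcz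
      have h9 := sub_eq_zero.mp hcz
      exact mul_right_cancel₀ hbi h9
    set c := b.coeff 0 with hcdef
    set B := b - C c with hBdef
    have hBd : B.natDegree = d := natDegree_sub_C
    have hBne : B ≠ 0 := fun h0 => by rw [h0, natDegree_zero] at hBd; omega
    have hB0 : B.coeff 0 = 0 := by rw [hBdef, coeff_sub, coeff_C_zero, sub_self]
    have hBcoeff : ∀ i, B.coeff i ≠ 0 → ζ ^ i = ζ ^ d := by
      intro i hBi
      rcases Nat.eq_zero_or_pos i with h0 | h0
      · rw [h0] at hBi; exact absurd hB0 hBi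
      · have h9 : B.coeff i = b.coeff i := by
          rw [hBdef, coeff_sub, coeff_C, if_neg (by omega), sub_zero]
        rw [h9] at hBi
        exact hbcoeff i h0 hBi
    have hBgrade : ∀ i, B.coeff i ≠ 0 → i ≡ B.natTrailingDegree [MOD n] := by
      intro i hBi
      have h1 := hBcoeff i hBi
      have h2 := hBcoeff B.natTrailingDegree (trailingCoeff_nonzero_iff_nonzero.mpr hBne)
      have h3 : ζ ^ i = ζ ^ B.natTrailingDegree := h1.trans h2.symm
      exact modEq_of_pow_eq hn hζprim h3
    obtain ⟨k, hk, htil, hBdec⟩ := grade_decomp n hn B hBne hB0 hBgrade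
    have hBeq : B.comp (C ζ * X) = C (ζ ^ k) * B := by
      rw [hBdec]; exact twisted_comp htil k n ζ hζn
    set A := a.comp (X + C c) with hA
    have hcompinv : (X + C c : ℂ[X]).comp (X - C c) = (X : ℂ[X]) := by simp
    have hAa : A.comp (X - C c) = a := by rw [hA, comp_assoc, hcompinv, comp_X]
    have hAne : A ≠ 0 := fun h0 => hane (by rw [← hAa, h0, zero_comp])
    have hbB : b = B + C c := by rw [hBdef]; ring
    have hAB : A.comp B = a.comp b := by
      rw [hA, comp_assoc]
      congr 1
      rw [add_comp, X_comp, C_comp, ← hbB]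
    have hcancel : A.comp (C (ζ ^ k) * X) = C (ζ ^ s) * A := by
      apply comp_right_cancel (B := B) (by rw [hBd]; omega)
      calc (A.comp (C (ζ ^ k) * X)).comp B
          = A.comp ((C (ζ ^ k) * X).comp B) := comp_assoc _ _ _
        _ = A.comp (C (ζ ^ k) * B) := by rw [mul_comp, C_comp, X_comp]
        _ = A.comp (B.comp (C ζ * X)) := by rw [hBeq]
        _ = (A.comp B).comp (C ζ * X) := (comp_assoc _ _ _).symm
        _ = C (ζ ^ s) * (a.comp b) := by rw [hAB, hPeq]
        _ = C (ζ ^ s) * (A.comp B) := by rw [hAB]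
        _ = (C (ζ ^ s) * A).comp B := by rw [mul_comp, C_comp]
    have hAcoeff : ∀ i, A.coeff i ≠ 0 → ζ ^ (k * i) = ζ ^ s := by
      intro i hAi
      have h1 := congrArg (fun p => Polynomial.coeff p i) hcancel
      simp only [coeff_comp_C_mul_X, coeff_C_mul] at h1
      have h2 : (ζ ^ k) ^ i = ζ ^ s := mul_right_cancel₀ hAi h1
      rwa [← pow_mul] at h2
    have hAtne : A.coeff A.natTrailingDegree ≠ 0 :=
      trailingCoeff_nonzero_iff_nonzero.mpr hAne
    have hkmod : k * A.natTrailingDegree ≡ s [MOD n] :=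
      modEq_of_pow_eq hn hζprim (hAcoeff A.natTrailingDegree hAtne)
    have hkcop : Nat.Coprime k n := by
      have hd1 : (n : ℤ) ∣ (s : ℤ) - ((k * A.natTrailingDegree : ℕ) : ℤ) :=
        hkmod.dvd
      have h2 : ((Nat.gcd k n : ℕ) : ℤ) ∣ ((k * A.natTrailingDegree : ℕ) : ℤ) :=
        Int.natCast_dvd_natCast.mpr (Dvd.dvd.mul_right (Nat.gcd_dvd_left _ _) _)
      have h3 : ((Nat.gcd k n : ℕ) : ℤ) ∣ (n : ℤ) :=
        Int.natCast_dvd_natCast.mpr (Nat.gcd_dvd_right _ _)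
      have h4 : ((Nat.gcd k n : ℕ) : ℤ) ∣ (s : ℤ) := by
        have h5 := dvd_add (dvd_trans h3 hd1) h2
        simpa using h5
      have h6 : Nat.gcd k n ∣ s := Int.natCast_dvd_natCast.mp h4
      have h7 : Nat.gcd k n ∣ Nat.gcd s n := Nat.dvd_gcd h6 (Nat.gcd_dvd_right _ _)
      have h8 : Nat.gcd s n = 1 := hcop
      exact Nat.dvd_one.mp (h8 ▸ h7)
    have hAgrade : ∀ i, A.coeff i ≠ 0 → i ≡ A.natTrailingDegree [MOD n] := by
      intro i hAi
      have h1 : k * i ≡ s [MOD n] := modEq_of_pow_eq hn hζprim (hAcoeff i hAi)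
      have h2 : k * i ≡ k * A.natTrailingDegree [MOD n] := h1.trans hkmod.symm
      exact Nat.ModEq.cancel_left_of_coprime (by rw [Nat.gcd_comm]; exact hkcop) h2
    have hA0 : A.coeff 0 = 0 := by
      rw [Polynomial.coeff_zero_eq_eval_zero, hA, eval_comp]
      have h1 : (X + C c : ℂ[X]).eval 0 = c := by simp
      rw [h1]
      have h2 := congrArg (Polynomial.eval (0 : ℂ)) H2
      rw [eval_comp] at h2
      have h3 : b.eval 0 = c := by rw [hcdef, Polynomial.coeff_zero_eq_eval_zero]
      rw [h3] at h2
      simpa [zero_pow hs.ne'] using h2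
    obtain ⟨j, hj, hhat, hAdec⟩ := grade_decomp n hn A hAne hA0 hAgrade
    refine ⟨j, k, hhat, htil, X - C c, X + C c, hj, hk, natDegree_X_sub_C c,
      by simp, by simp, ?_, ?_⟩
    · rw [← hAdec]; exact hAa.symm
    · rw [← hBdec, add_comp, X_comp, C_comp]
      exact hbB
end

section
/- Let f, g ∈ ℂ[X] be nonconstant and n > 1 an integer. Then f ∘ g is a polynomial in X^n (i.e., f ∘ g = F ∘ X^n for some F ∈ ℂ[X]) if and only if there exist an integer s ≥ 0, polynomials f̂, ĝ ∈ ℂ[X], and a linear ℓ ∈ ℂ[X] such that f = f̂(X^{n/gcd(n,s)}) ∘ ℓ^{-1} and g = ℓ ∘ X^s·ĝ(X^n). -/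
open Polynomial Finset

lemma coeff_comp_C_mul_X (p : ℂ[X]) (z : ℂ) (i : ℕ) :
    (p.comp (C z * X)).coeff i = z ^ i * p.coeff i := by
  rw [comp_eq_sum_left, Polynomial.sum_def, finset_sum_coeff]
  simp only [mul_pow, ← C_pow, ← mul_assoc, ← C_mul, coeff_C_mul, coeff_X_pow]
  rw [Finset.sum_eq_single i]
  · by_cases h : i ∈ p.support
    · simp [mul_comm]
    · simp [Polynomial.notMem_support_iff.1 h]
  · intro b _ hb; simp [Ne.symm hb]
  · intro h; simp [Polynomial.notMem_support_iff.1 h]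

lemma comp_cancel {p q h : ℂ[X]} (hh : 0 < h.natDegree) (H : p.comp h = q.comp h) : p = q := by
  by_contra hne
  have h2 : p - q ≠ 0 := sub_ne_zero.2 hne
  have h1 : (p - q).comp h = 0 := by rw [sub_comp, H, sub_self]
  have := leadingCoeff_comp (p := p - q) (q := h) hh.ne'
  rw [h1, leadingCoeff_zero] at this
  have hh0 : h ≠ 0 := fun e => by simp [e] at hh
  exact (mul_ne_zero (leadingCoeff_ne_zero.2 h2) (pow_ne_zero _ (leadingCoeff_ne_zero.2 hh0))) this.symm


lemma extract_pow (p : ℂ[X]) (n s : ℕ) (hs : ∀ i, p.coeff i ≠ 0 → i % n = s) :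
    ∃ q : ℂ[X], p = X ^ s * q.comp (X ^ n) := by
  refine ⟨∑ i ∈ p.support, C (p.coeff i) * X ^ ((i - s) / n), ?_⟩
  rw [Polynomial.sum_comp, Finset.mul_sum]
  conv_lhs => rw [p.as_sum_support]
  refine Finset.sum_congr rfl fun i hi => ?_
  have hc : p.coeff i ≠ 0 := Polynomial.mem_support_iff.1 hi
  have him : i % n = s := hs i hc
  have hsle : s ≤ i := him ▸ Nat.mod_le i n
  have hdvd : n ∣ i - s := by
    have := Nat.div_add_mod i n
    exact ⟨i / n, by omega⟩
  rw [mul_comp, C_comp, X_pow_comp, ← pow_mul, Nat.mul_div_cancel' hdvd]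
  rw [mul_left_comm, ← pow_add, Nat.add_sub_cancel' hsle, C_mul_X_pow_eq_monomial]

lemma approx_root {f u v : ℂ[X]} (hfm : f.Monic) (hf : 0 < f.natDegree) (ε : ℂ)
    (hdu : u.natDegree = v.natDegree) (hv : 0 < v.natDegree)
    (hlc : u.leadingCoeff = ε * v.leadingCoeff)
    (hε : ε ^ f.natDegree = 1)
    (H : f.comp u = f.comp v) :
    ∃ c : ℂ, u + C c = C ε * (v + C c) := by
  set k := f.natDegree with hk
  set m := v.natDegree with hm
  have hkC : (k : ℂ) ≠ 0 := Nat.cast_ne_zero.2 hf.ne'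
  set c₀ : ℂ := f.coeff (k-1) / k with hc0
  set r : ℂ[X] := f - (X + C c₀)^k with hr
  refine ⟨c₀, ?_⟩
  by_contra hne
  have hε0 : ε ≠ 0 := by
    intro h; rw [h, zero_pow hf.ne'] at hε; exact zero_ne_one hε
  have hvne : v ≠ 0 := by intro e; rw [hm, e, natDegree_zero] at hv; exact lt_irrefl 0 hv
  have hune : u ≠ 0 := fun e => by rw [e, natDegree_zero] at hdu; omega
  -- degree bound on r
  have hrdeg : r.degree < ((k-1 : ℕ) : WithBot ℕ) := by
    rw [degree_lt_iff_coeff_zero]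
    intro j hj
    have hj' : k - 1 ≤ j := by exact_mod_cast hj
    rw [hr, coeff_sub, coeff_X_add_C_pow]
    rcases lt_trichotomy j k with h1 | h1 | h1
    · have hjk : j = k - 1 := by omega
      subst hjk
      have h2 : k - (k-1) = 1 := by omega
      have h3 : k.choose (k-1) = k := by
        rw [← Nat.choose_symm (by omega : k - 1 ≤ k)]
        simp [h2]
      rw [h2, h3, pow_one, hc0, div_mul_cancel₀ _ hkC, sub_self]
    · subst h1
      rw [Nat.sub_self, pow_zero, Nat.choose_self, hfm.coeff_natDegree]
      simp
    · rw [coeff_eq_zero_of_natDegree_lt h1, Nat.choose_eq_zero_of_lt h1]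
      simp
  set w₁ : ℂ[X] := u + C c₀ with hw₁
  set w₂ : ℂ[X] := C ε * (v + C c₀) with hw₂
  have hw₁d : w₁.natDegree = m := by rw [hw₁, natDegree_add_C, hdu]
  have hw₂d : w₂.natDegree = m := by rw [hw₂, natDegree_C_mul hε0, natDegree_add_C]
  have hw₁ne : w₁ ≠ 0 := fun e => by rw [e, natDegree_zero] at hw₁d; omega
  have hw₂ne : w₂ ≠ 0 := fun e => by rw [e, natDegree_zero] at hw₂d; omega
  have hdegu : (0 : WithBot ℕ) < u.degree :=
    natDegree_pos_iff_degree_pos.1 (by rw [hdu]; exact hv)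
  have hdegv : (0 : WithBot ℕ) < v.degree := natDegree_pos_iff_degree_pos.1 hv
  have hw₁lc : w₁.leadingCoeff = u.leadingCoeff := by
    rw [hw₁]
    exact leadingCoeff_add_of_degree_lt' (lt_of_le_of_lt (degree_C_le) hdegu)
  have hw₂lc : w₂.leadingCoeff = ε * v.leadingCoeff := by
    rw [hw₂, leadingCoeff_mul, leadingCoeff_C]
    congr 1
    exact leadingCoeff_add_of_degree_lt' (lt_of_le_of_lt (degree_C_le) hdegv)
  have hlc12 : w₁.leadingCoeff = w₂.leadingCoeff := by rw [hw₁lc, hw₂lc, hlc]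
  have hBne : w₁.leadingCoeff ≠ 0 := leadingCoeff_ne_zero.2 hw₁ne
  -- comp identities
  have hru : r.comp u = f.comp u - w₁^k := by
    rw [hr, sub_comp, pow_comp, add_comp, X_comp, C_comp, hw₁]
  have hrv : r.comp v = f.comp v - (v + C c₀)^k := by
    rw [hr, sub_comp, pow_comp, add_comp, X_comp, C_comp]
  have hw₂k : w₂^k = (v + C c₀)^k := by
    rw [hw₂, mul_pow, ← C_pow, hε, C_1, one_mul]
  have key : w₁^k - w₂^k = r.comp v - r.comp u := by
    rw [hru, hrv, hw₂k, H]; ring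
  -- degree of r.comp
  have hrc : ∀ w : ℂ[X], w.natDegree = m → (r.comp w).degree < (((k-1)*m : ℕ) : WithBot ℕ) := by
    intro w hw
    rcases eq_or_ne (r.comp w) 0 with h0 | h0
    · rw [h0, degree_zero]; exact WithBot.bot_lt_coe _
    · have hr0 : r ≠ 0 := fun e => h0 (by rw [e, zero_comp])
      have h1 : r.natDegree < k - 1 := (natDegree_lt_iff_degree_lt hr0).2 hrdeg
      rw [degree_eq_natDegree h0]
      have h2 : (r.comp w).natDegree < (k-1)*m := by
        calc (r.comp w).natDegree ≤ r.natDegree * m := by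
              rw [← hw]; exact natDegree_comp_le
          _ < (k-1)*m := (Nat.mul_lt_mul_right hv).2 h1
      exact_mod_cast h2
  have hdlt : (w₁^k - w₂^k).degree < (((k-1)*m : ℕ) : WithBot ℕ) := by
    rw [key]
    exact lt_of_le_of_lt (degree_sub_le _ _) (max_lt (hrc v rfl) (hrc u hdu))
  -- geometric sum factor
  set S : ℂ[X] := ∑ i ∈ range k, w₁^i * w₂^(k-1-i) with hS
  have hgeom : S * (w₁ - w₂) = w₁^k - w₂^k := geom_sum₂_mul w₁ w₂ k
  have Scoeff : S.coeff ((k-1)*m) = k * w₁.leadingCoeff^(k-1) := by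
    rw [hS, finset_sum_coeff]
    have hterm : ∀ i ∈ range k, (w₁^i * w₂^(k-1-i)).coeff ((k-1)*m)
        = w₁.leadingCoeff^(k-1) := by
      intro i hi
      have hi' : i ≤ k-1 := by have := mem_range.1 hi; omega
      have hiadd : i + (k-1-i) = k-1 := by omega
      have hd : (w₁^i * w₂^(k-1-i)).natDegree = (k-1)*m := by
        rw [natDegree_mul (pow_ne_zero _ hw₁ne) (pow_ne_zero _ hw₂ne),
          natDegree_pow, natDegree_pow, hw₁d, hw₂d, ← add_mul, hiadd]
      rw [← hd, coeff_natDegree, leadingCoeff_mul, leadingCoeff_pow, leadingCoeff_pow,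
        ← hlc12, ← pow_add, hiadd]
    rw [Finset.sum_congr rfl hterm, Finset.sum_const, card_range, nsmul_eq_mul]
  have hSne : S.coeff ((k-1)*m) ≠ 0 := by
    rw [Scoeff]
    exact mul_ne_zero hkC (pow_ne_zero _ hBne)
  have hSdeg : (((k-1)*m : ℕ) : WithBot ℕ) ≤ S.degree := le_degree_of_ne_zero hSne
  have hsub : w₁ - w₂ ≠ 0 := sub_ne_zero.2 hne
  rw [← hgeom, degree_mul] at hdlt
  have h₁ : (0 : WithBot ℕ) ≤ (w₁ - w₂).degree := zero_le_degree_iff.2 hsub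
  have h₂ : (((k-1)*m : ℕ) : WithBot ℕ) ≤ S.degree + (w₁-w₂).degree :=
    le_trans hSdeg (le_add_of_nonneg_right h₁)
  exact absurd hdlt (not_lt.2 h₂)

theorem comp_in_Xn_iff
    (f g : ℂ[X]) (hf : 0 < f.natDegree) (hg : 0 < g.natDegree)
    (n : ℕ) (hn : 1 < n) :
    (∃ F : ℂ[X], f.comp g = F.comp (Polynomial.X ^ n)) ↔
    ∃ (s : ℕ) (fhat ghat ℓ ℓinv : ℂ[X]),
      ℓ.natDegree = 1 ∧ ℓ.comp ℓinv = Polynomial.X ∧ ℓinv.comp ℓ = Polynomial.X ∧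
      f = (fhat.comp (Polynomial.X ^ (n / Nat.gcd n s))).comp ℓinv ∧
      g = ℓ.comp (Polynomial.X ^ s * ghat.comp (Polynomial.X ^ n)) := by
  constructor
  · rintro ⟨F, hF⟩
    have hn0 : n ≠ 0 := by omega
    set ζ : ℂ := Complex.exp (2 * Real.pi * Complex.I / n) with hζdef
    have hζ : IsPrimitiveRoot ζ n := Complex.isPrimitiveRoot_exp n hn0
    set k := f.natDegree with hkdef
    set m := g.natDegree with hmdef
    have hζn : ζ ^ n = 1 := hζ.pow_eq_one
    have hζ0 : ζ ≠ 0 := hζ.ne_zero hn0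
    have hdeg : k * m = F.natDegree * n := by
      rw [hkdef, hmdef, ← natDegree_comp, hF, natDegree_comp, natDegree_X_pow]
    have hdvd : n ∣ k * m := ⟨F.natDegree, by rw [hdeg, mul_comm]⟩
    have hXn : (X ^ n : ℂ[X]).comp (C ζ * X) = X ^ n := by
      rw [X_pow_comp, mul_pow, ← C_pow, hζn, C_1, one_mul]
    have hinv : (f.comp g).comp (C ζ * X) = f.comp g := by
      rw [hF, comp_assoc, hXn]
    set u := g.comp (C ζ * X) with hu
    have hCXd : (C ζ * X : ℂ[X]).natDegree = 1 := by
      rw [natDegree_C_mul hζ0, natDegree_X]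
    have hud : u.natDegree = m := by rw [hu, natDegree_comp, hCXd, mul_one]
    have hgne : g ≠ 0 := fun e => by rw [hmdef, e, natDegree_zero] at hg; omega
    have hfne : f ≠ 0 := fun e => by rw [hkdef, e, natDegree_zero] at hf; omega
    have hulc : u.leadingCoeff = ζ ^ m * g.leadingCoeff := by
      rw [hu, leadingCoeff_comp (by rw [hCXd]; omega)]
      have : (C ζ * X : ℂ[X]).leadingCoeff = ζ := by
        rw [leadingCoeff_mul, leadingCoeff_C, leadingCoeff_X, mul_one]
      rw [this, mul_comm]
    set a := f.leadingCoeff with hadef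
    have ha : a ≠ 0 := leadingCoeff_ne_zero.2 hfne
    set f' := f * C a⁻¹ with hf'
    have hf'm : f'.Monic := monic_mul_leadingCoeff_inv hfne
    have hf'd : f'.natDegree = k := natDegree_mul_C (inv_ne_zero ha)
    have hcomp : f.comp u = f.comp g := by
      rw [hu, ← comp_assoc, hinv]
    have hH : f'.comp u = f'.comp g := by simp only [hf', mul_comp, C_comp, hcomp]
    have hε : (ζ ^ m) ^ k = 1 := by
      rw [← pow_mul, hζ.pow_eq_one_iff_dvd]
      rwa [mul_comm] at hdvd
    obtain ⟨c, hc⟩ := approx_root hf'm (by rw [hf'd]; exact hf) (ζ ^ m) hud hg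
      hulc (by rwa [hf'd]) hH
    set h : ℂ[X] := g + C c with hh
    have hhcomp : h.comp (C ζ * X) = C (ζ ^ m) * h := by
      rw [hh, add_comp, C_comp]
      exact hc
    have hcoeffh : ∀ i, h.coeff i ≠ 0 → i % n = m % n := by
      intro i hi
      have h1 := congrArg (fun p => p.coeff i) hhcomp
      simp only [coeff_comp_C_mul_X, coeff_C_mul] at h1
      have h2 : ζ ^ i = ζ ^ m := mul_right_cancel₀ hi h1
      have h3 : ζ ^ (i % n) = ζ ^ (m % n) := by
        rw [← Nat.div_add_mod i n, ← Nat.div_add_mod m n] at h2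
        simp only [pow_add, pow_mul, hζn, one_pow, one_mul] at h2
        exact h2
      exact hζ.pow_inj (Nat.mod_lt _ (by omega)) (Nat.mod_lt _ (by omega)) h3
    obtain ⟨ghat, hghat⟩ := extract_pow h n (m % n) hcoeffh
    set s := m % n with hsdef
    set ℓp : ℂ[X] := X - C c with hℓp
    set ℓq : ℂ[X] := X + C c with hℓq
    set f₁ := f.comp ℓp with hf₁
    have hℓℓ : ℓp.comp ℓq = X := by
      rw [hℓp, hℓq, sub_comp, X_comp, C_comp, add_sub_cancel_right]
    have hℓℓ' : ℓq.comp ℓp = X := by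
      rw [hℓp, hℓq, add_comp, X_comp, C_comp, sub_add_cancel]
    have hℓph : ℓp.comp h = g := by
      rw [hℓp, hh, sub_comp, X_comp, C_comp, add_sub_cancel_right]
    have hf₁h : f₁.comp h = f.comp g := by
      rw [hf₁, comp_assoc, hℓph]
    have hhd : h.natDegree = m := by rw [hh, natDegree_add_C]
    have hhpos : 0 < h.natDegree := by rw [hhd]; exact hg
    have hstep : (f₁.comp (C (ζ ^ m) * X)).comp h = f₁.comp h := by
      have e1 : (C (ζ ^ m) * X : ℂ[X]).comp h = C (ζ ^ m) * h := by
        rw [mul_comp, C_comp, X_comp]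
      rw [comp_assoc, e1, ← hhcomp, ← comp_assoc, hf₁h, hinv, ← hf₁h]
    have hf₁inv : f₁.comp (C (ζ ^ m) * X) = f₁ := comp_cancel hhpos hstep
    set d := Nat.gcd n s with hd
    have hdm : d = Nat.gcd n m := by
      rw [hd, hsdef, Nat.gcd_comm n (m % n), ← Nat.gcd_rec, Nat.gcd_comm]
    have hd0 : 0 < d := Nat.gcd_pos_of_pos_left _ (by omega)
    have hdn : d ∣ n := hd ▸ Nat.gcd_dvd_left n s
    have hdmm : d ∣ m := hdm ▸ Nat.gcd_dvd_right n m
    set e := n / d with he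
    have he0 : 0 < e := Nat.div_pos (Nat.le_of_dvd (by omega) hdn) hd0
    have hcop : Nat.Coprime (n / d) (m / d) := by
      rw [hdm]; exact Nat.coprime_div_gcd_div_gcd (hdm ▸ hd0)
    have hcoefff₁ : ∀ i, f₁.coeff i ≠ 0 → i % e = 0 := by
      intro i hi
      have h1 := congrArg (fun p => p.coeff i) hf₁inv
      simp only [coeff_comp_C_mul_X] at h1
      have h2 : (ζ ^ m) ^ i = 1 := by
        have := mul_right_cancel₀ hi (h1.trans (one_mul (f₁.coeff i)).symm)
        exact this
      rw [← pow_mul, hζ.pow_eq_one_iff_dvd] at h2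
      -- n ∣ m * i  →  e ∣ i
      have h3 : n / d ∣ (m / d) * i := by
        have hn' : n = d * (n / d) := (Nat.mul_div_cancel' hdn).symm
        have hm' : m = d * (m / d) := (Nat.mul_div_cancel' hdmm).symm
        rw [hn', hm'] at h2
        rw [mul_assoc] at h2
        exact (Nat.mul_dvd_mul_iff_left hd0).1 h2
      have h4 : e ∣ i := hcop.dvd_of_dvd_mul_left h3
      obtain ⟨t, rfl⟩ := h4
      exact Nat.mul_mod_right e t

    obtain ⟨fhat, hfhat⟩ := extract_pow f₁ e 0 hcoefff₁
    rw [pow_zero, one_mul] at hfhat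
    refine ⟨s, fhat, ghat, ℓp, ℓq, hℓp ▸ natDegree_X_sub_C c, hℓℓ, hℓℓ', ?_, ?_⟩
    · rw [← he, ← hfhat, hf₁, comp_assoc, hℓℓ, comp_X]
    · rw [← hghat, hℓph]
  · rintro ⟨s, fhat, ghat, ℓ, ℓinv, hℓ1, hℓ2, hℓ3, hfe, hge⟩
    set d := Nat.gcd n s with hd
    have hd0 : 0 < d := Nat.gcd_pos_of_pos_left _ (by omega)
    have hdn : d ∣ n := Nat.gcd_dvd_left n s
    have hds : d ∣ s := Nat.gcd_dvd_right n s
    set e := n / d with he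
    set w : ℂ[X] := X ^ s * ghat.comp (X ^ n) with hw
    refine ⟨fhat.comp (X ^ (s / d) * ghat ^ e), ?_⟩
    have harith : s * e = n * (s / d) := by
      rw [he, ← Nat.mul_div_assoc s hdn, ← Nat.mul_div_assoc n hds, mul_comm s n]
    have hwe : w ^ e = (X ^ (s / d) * ghat ^ e).comp (X ^ n) := by
      rw [hw, mul_pow, ← pow_mul, ← pow_comp, mul_comp, X_pow_comp, ← pow_mul,
        harith, mul_comm n (s/d)]
    rw [hfe, hge, comp_assoc, comp_assoc, ← comp_assoc ℓinv ℓ w, hℓ3, X_comp,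
      comp_assoc, X_pow_comp, hwe, ← comp_assoc]
end
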